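/- arXiv:0906.0377 — 4 statements merged into one kernel-verified Lean document; each statement's English description precedes it below -/
import Mathlib

section
/- Let τ be a word of n−1 distinct integers and let p and q be two distinct integers not appearing in τ. Fix j ∈ {1,...,n} and let τ_j^p be the word of length n formed by inserting p into τ at position j. Then the set of the first j entries of MIS(τ_j^p, q) equals the set {x + χ(q > p) : x is one of the first j entries of MIS(τ, p)}, where χ(q > p) = 1 if q > p and 0 otherwise. That is, the first j entries of MIS(τ_j^p, q) are a permutation of the first j entries of MIS(τ,p), each increased by 1 if q > p and unchanged if q < p. -/
open Polynomial

/-- The word (1, 2, ..., n) as a list of integers. -/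
def W (n : ℕ) : List ℤ := (List.range n).map (fun i => (i : ℤ) + 1)

/-- Descent set of a word: 1-based indices i ∈ {1,...,m-1} with w(i) > w(i+1). -/
def descSet (w : List ℤ) : Finset ℕ :=
  (Finset.Icc 1 (w.length - 1)).filter (fun i => w.getD (i - 1) 0 > w.getD i 0)

/-- Major index of a word: the sum of its descents. -/
def maj (w : List ℤ) : ℕ := ∑ i ∈ descSet w, i

/-- `dstat w k` is the number of descents of `w` that are ≥ k. -/
def dstat (w : List ℤ) (k : ℕ) : ℕ := ((descSet w).filter (fun i => k ≤ i)).card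

/-- Major increment: the change in major index when `r` is inserted into `w`
at (1-based) position `k`. -/
def mi (w : List ℤ) (k : ℕ) (r : ℤ) : ℤ := (maj (w.insertIdx (k - 1) r) : ℤ) - (maj w : ℤ)

/-- The q-factorial [m]_q! = ∏_{i=1}^m (1 + q + ... + q^{i-1}), as a polynomial in q. -/
noncomputable def qFact (m : ℕ) : Polynomial ℚ :=
  ∏ i ∈ Finset.range m, ∑ j ∈ Finset.range (i + 1), (X : Polynomial ℚ) ^ j

/-- The q-binomial coefficient [n choose a]_q = [n]_q!/([a]_q!·[n−a]_q!). -/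
noncomputable def qBinom (n a : ℕ) : Polynomial ℚ := qFact n / (qFact a * qFact (n - a))

/-- The set of all shuffles of two words `θ` and `π` (words containing `θ` and `π`
as complementary subwords). -/
def shuffles (θ π : List ℤ) : Finset (List ℤ) :=
  (θ ++ π).permutations.toFinset.filter (fun σ => θ.Sublist σ ∧ π.Sublist σ)

lemma mem_descSet (w : List ℤ) (i : ℕ) :
    i ∈ descSet w ↔ 1 ≤ i ∧ i + 1 ≤ w.length ∧ w.getD i 0 < w.getD (i-1) 0 := by
  simp only [descSet, Finset.mem_filter, Finset.mem_Icc, gt_iff_lt]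
  constructor
  · rintro ⟨⟨h1, h2⟩, h3⟩; exact ⟨h1, by omega, h3⟩
  · rintro ⟨h1, h2, h3⟩; exact ⟨⟨h1, by omega⟩, h3⟩

lemma getD_insertIdx (w : List ℤ) (r : ℤ) {t : ℕ} (ht : t ≤ w.length) (i : ℕ) :
    (w.insertIdx t r).getD i 0 =
      if i < t then w.getD i 0 else if i = t then r else w.getD (i-1) 0 := by
  have hlen : (w.insertIdx t r).length = w.length + 1 := List.length_insertIdx_of_le_length ht _
  rcases Nat.lt_trichotomy i t with h | h | h
  · rw [if_pos h]
    have hi : i < w.length := lt_of_lt_of_le h ht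
    rw [List.getD_eq_getElem _ _ (by omega), List.getD_eq_getElem _ _ hi,
      List.getElem_insertIdx_of_lt h (by omega)]
  · subst h
    rw [if_neg (lt_irrefl _), if_pos rfl, List.getD_eq_getElem _ _ (by omega),
      List.getElem_insertIdx_self (by omega)]
  · rw [if_neg (by omega), if_neg (by omega)]
    by_cases hi : i ≤ w.length
    · have h1 : i - 1 < w.length := by omega
      have h2 : t + (i - t - 1) = i - 1 := by omega
      rw [List.getD_eq_getElem _ _ (by omega), List.getD_eq_getElem _ _ h1]
      have := List.getElem_insertIdx_add_succ w r t (i - t - 1) (by omega)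
      have h3 : t + (i - t - 1) + 1 = i := by omega
      convert this using 2 <;> omega
    · rw [List.getD_eq_default _ _ (by omega), List.getD_eq_default _ _ (by omega)]

lemma descSet_insertIdx (w : List ℤ) (r : ℤ) {t : ℕ} (ht : t ≤ w.length) :
    descSet (w.insertIdx t r) =
      (((descSet w).filter (fun i => i < t)) ∪
       ((descSet w).filter (fun i => t < i)).image (fun i => i + 1)) ∪
      ((if 1 ≤ t ∧ r < w.getD (t-1) 0 then {t} else ∅) ∪
       (if t < w.length ∧ w.getD t 0 < r then {t+1} else ∅)) := by
  have hlen : (w.insertIdx t r).length = w.length + 1 := List.length_insertIdx_of_le_length ht _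
  ext i
  simp only [Finset.mem_union, Finset.mem_filter, Finset.mem_image, mem_descSet, hlen]
  rw [getD_insertIdx w r ht i, getD_insertIdx w r ht (i-1)]
  constructor
  · rintro ⟨h1, h2, h3⟩
    rcases Nat.lt_trichotomy i t with h | h | h
    · rw [if_pos h, if_pos (by omega : i - 1 < t)] at h3
      exact Or.inl (Or.inl ⟨⟨h1, by omega, h3⟩, h⟩)
    · subst h
      rw [if_neg (lt_irrefl _), if_pos rfl, if_pos (by omega : i - 1 < i)] at h3
      refine Or.inr (Or.inl ?_)
      rw [if_pos ⟨h1, h3⟩]; simp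
    · rcases Nat.eq_or_lt_of_le h with h' | h'
      · rw [if_neg (by omega), if_neg (by omega), if_neg (by omega), if_pos (by omega)] at h3
        refine Or.inr (Or.inr ?_)
        have e : i - 1 = t := by omega
        rw [e] at h3
        rw [if_pos ⟨by omega, h3⟩]; simp [← h']
      · rw [if_neg (by omega), if_neg (by omega), if_neg (by omega), if_neg (by omega)] at h3
        exact Or.inl (Or.inr ⟨i - 1, ⟨⟨by omega, by omega, h3⟩, by omega⟩, by omega⟩)
  · rintro ((⟨⟨h1, h2, h3⟩, h⟩ | ⟨a, ⟨⟨h1, h2, h3⟩, ha⟩, rfl⟩) | (h | h))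
    · rw [if_pos h, if_pos (by omega)]
      exact ⟨h1, by omega, h3⟩
    · rw [if_neg (by omega), if_neg (by omega), if_neg (by omega), if_neg (by omega)]
      refine ⟨by omega, by omega, ?_⟩
      have e1 : a + 1 - 1 = a := by omega
      rw [e1]; exact h3
    · split_ifs at h with hc
      · simp only [Finset.mem_singleton] at h
        subst h
        rw [if_neg (lt_irrefl _), if_pos rfl, if_pos (by omega)]
        exact ⟨hc.1, by omega, hc.2⟩
      · simp at h
    · split_ifs at h with hc
      · simp only [Finset.mem_singleton] at h
        subst h
        rw [if_neg (by omega), if_neg (by omega), if_neg (by omega), if_pos (by omega)]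
        refine ⟨by omega, by omega, ?_⟩
        have : t + 1 - 1 = t := by omega
        rw [this]; exact hc.2
      · simp at h

lemma dstat_eq_card (w : List ℤ) (t : ℕ) :
    dstat w (t+1) = ((descSet w).filter (fun i => t < i)).card := by
  rw [dstat]
  congr 1

lemma mi_formula (w : List ℤ) (r : ℤ) {t : ℕ} (ht : t ≤ w.length) :
    mi w (t+1) r = (dstat w (t+1) : ℤ)
      + (if 1 ≤ t ∧ r < w.getD (t-1) 0 then (t : ℤ) else 0)
      + (if t < w.length ∧ w.getD t 0 < r then (t : ℤ) + 1 else 0)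
      - (if t ∈ descSet w then (t : ℤ) else 0) := by
  classical
  set D := descSet w with hD
  set A := D.filter (fun i => i < t) with hA
  set B := D.filter (fun i => t < i) with hB
  set S3 := (if 1 ≤ t ∧ r < w.getD (t-1) 0 then ({t} : Finset ℕ) else ∅) with hS3
  set S4 := (if t < w.length ∧ w.getD t 0 < r then ({t+1} : Finset ℕ) else ∅) with hS4
  have hmemA : ∀ x ∈ A, x < t := fun x hx => (Finset.mem_filter.mp hx).2
  have hmemB' : ∀ x ∈ B.image (fun i => i + 1), t + 1 < x := by
    rintro x hx
    obtain ⟨i, hi, rfl⟩ := Finset.mem_image.mp hx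
    have := (Finset.mem_filter.mp hi).2
    omega
  have hmemS3 : ∀ x ∈ S3, x = t := by
    intro x hx
    rw [hS3] at hx
    split_ifs at hx
    · simpa using hx
    · simp at hx
  have hmemS4 : ∀ x ∈ S4, x = t + 1 := by
    intro x hx
    rw [hS4] at hx
    split_ifs at hx
    · simpa using hx
    · simp at hx
  have hd1 : Disjoint A (B.image (fun i => i + 1)) := by
    rw [Finset.disjoint_left]
    intro x hx hy
    have := hmemA x hx; have := hmemB' x hy; omega
  have hd2 : Disjoint S3 S4 := by
    rw [Finset.disjoint_left]
    intro x hx hy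
    have := hmemS3 x hx; have := hmemS4 x hy; omega
  have hd3 : Disjoint (A ∪ B.image (fun i => i + 1)) (S3 ∪ S4) := by
    rw [Finset.disjoint_left]
    intro x hx hy
    rcases Finset.mem_union.mp hx with h | h <;> rcases Finset.mem_union.mp hy with h' | h'
    · have := hmemA x h; have := hmemS3 x h'; omega
    · have := hmemA x h; have := hmemS4 x h'; omega
    · have := hmemB' x h; have := hmemS3 x h'; omega
    · have := hmemB' x h; have := hmemS4 x h'; omega
  have hmaj' : maj (w.insertIdx t r) =
      ((∑ i ∈ A, i) + ((∑ i ∈ B, i) + B.card)) +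
      ((if 1 ≤ t ∧ r < w.getD (t-1) 0 then t else 0) +
       (if t < w.length ∧ w.getD t 0 < r then t + 1 else 0)) := by
    rw [maj, descSet_insertIdx w r ht, ← hD, ← hA, ← hB, ← hS3, ← hS4,
      Finset.sum_union hd3, Finset.sum_union hd1, Finset.sum_union hd2]
    congr 1
    · congr 1
      rw [Finset.sum_image (by intro x _ y _ h; simp only at h; omega)]
      rw [Finset.sum_add_distrib, Finset.sum_const, smul_eq_mul, mul_one]
    · congr 1
      · rw [hS3]; split_ifs <;> simp
      · rw [hS4]; split_ifs <;> simp
  have hmaj : maj w = (∑ i ∈ A, i) + ((∑ i ∈ B, i) + (if t ∈ D then t else 0)) := by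
    rw [maj, ← hD, ← Finset.sum_filter_add_sum_filter_not D (fun i => i < t) (fun i => i), ← hA]
    congr 1
    rw [← Finset.sum_filter_add_sum_filter_not (D.filter (fun i => ¬ i < t))
      (fun i => t < i) (fun i => i), Finset.filter_filter, Finset.filter_filter]
    congr 1
    · congr 1
      rw [hB]
      apply Finset.filter_congr
      intro x _
      constructor
      · rintro ⟨_, h⟩; exact h
      · intro h; exact ⟨by omega, h⟩
    · have he : D.filter (fun i => ¬ i < t ∧ ¬ t < i) = D.filter (fun i => i = t) := by
        apply Finset.filter_congr
        intro x _
        constructor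
        · rintro ⟨h1, h2⟩; omega
        · intro h; omega
      rw [he, Finset.filter_eq']
      split_ifs <;> simp
  have hcard : dstat w (t+1) = B.card := dstat_eq_card w t
  rw [mi, Nat.add_sub_cancel, hmaj', hmaj, hcard]
  split_ifs <;> push_cast <;> ring

lemma dstat_succ (w : List ℤ) (j : ℕ) :
    dstat w j = dstat w (j+1) + (if j ∈ descSet w then 1 else 0) := by
  rw [dstat, dstat]
  have hsplit : (descSet w).filter (fun i => j ≤ i) =
      (descSet w).filter (fun i => j+1 ≤ i) ∪ (descSet w).filter (fun i => i = j) := by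
    ext x
    simp only [Finset.mem_filter, Finset.mem_union]
    constructor
    · rintro ⟨h, h'⟩
      rcases Nat.eq_or_lt_of_le h' with h'' | h''
      · exact Or.inr ⟨h, h''.symm⟩
      · exact Or.inl ⟨h, h''⟩
    · rintro (⟨h, h'⟩ | ⟨h, h'⟩) <;> exact ⟨h, by omega⟩
  have hdisj : Disjoint ((descSet w).filter (fun i => j+1 ≤ i))
      ((descSet w).filter (fun i => i = j)) := by
    rw [Finset.disjoint_left]
    intro x hx hy
    have := (Finset.mem_filter.mp hx).2
    have := (Finset.mem_filter.mp hy).2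
    omega
  rw [hsplit, Finset.card_union_of_disjoint hdisj, Finset.filter_eq']
  split_ifs <;> simp

def cval (w : List ℤ) (j : ℕ) (r : ℤ) : ℤ :=
  (dstat w j : ℤ) + (if j ≤ w.length ∧ w.getD (j-1) 0 < r then 1 else 0)

lemma lemA (σ : List ℤ) (hnd : σ.Nodup) (r : ℤ) (hr : r ∉ σ) :
    ∀ j : ℕ, 1 ≤ j → j ≤ σ.length + 1 →
    (Finset.Icc 1 j).image (fun k => mi σ k r) =
      Finset.Icc (cval σ j r) (cval σ j r + (j : ℤ) - 1) := by
  intro j hj1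
  induction j, hj1 using Nat.le_induction with
  | base =>
    intro _
    have hf := mi_formula σ r (t := 0) (Nat.zero_le _)
    simp only [Nat.zero_add] at hf
    have h0 : (0:ℕ) ∉ descSet σ := by
      rw [mem_descSet]; rintro ⟨h, -⟩; omega
    rw [if_neg h0, if_neg (by rintro ⟨h, -⟩; omega : ¬((1:ℕ) ≤ 0 ∧ r < σ.getD (0-1) 0))] at hf
    have hm : mi σ 1 r = cval σ 1 r := by
      rw [hf, cval]
      simp only [Nat.sub_self]
      split_ifs with h1 h2 h2 <;> push_cast <;> omega
    rw [Finset.Icc_self, Finset.image_singleton, hm]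
    have he : cval σ 1 r + ((1:ℕ):ℤ) - 1 = cval σ 1 r := by push_cast; ring
    rw [he, Finset.Icc_self]
  | succ j hj ih =>
    intro hlen
    have hjlen : j ≤ σ.length := by omega
    have hIcc : Finset.Icc 1 (j+1) = insert (j+1) (Finset.Icc 1 j) := by
      ext x
      simp only [Finset.mem_Icc, Finset.mem_insert]
      omega
    rw [hIcc, Finset.image_insert, ih (by omega)]
    have hf := mi_formula σ r (t := j) hjlen
    have hds := dstat_succ σ j
    have hdc : j ∈ descSet σ ↔ (j + 1 ≤ σ.length ∧ σ.getD j 0 < σ.getD (j-1) 0) := by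
      rw [mem_descSet]
      exact ⟨fun ⟨_, h2, h3⟩ => ⟨h2, h3⟩, fun ⟨h2, h3⟩ => ⟨hj, h2, h3⟩⟩
    simp only [hdc] at hf hds
    have hmem1 : σ.getD (j-1) 0 ∈ σ := by
      rw [List.getD_eq_getElem _ _ (by omega)]
      exact List.getElem_mem _
    have hne1 : σ.getD (j-1) 0 ≠ r := fun h => hr (h ▸ hmem1)
    by_cases hjl : j < σ.length
    · have hmem2 : σ.getD j 0 ∈ σ := by
        rw [List.getD_eq_getElem _ _ hjl]
        exact List.getElem_mem _
      have hne2 : σ.getD j 0 ≠ r := fun h => hr (h ▸ hmem2)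
      have hne3 : σ.getD (j-1) 0 ≠ σ.getD j 0 := by
        rw [List.getD_eq_getElem _ _ (by omega), List.getD_eq_getElem _ _ hjl]
        intro h
        have := (List.Nodup.getElem_inj_iff hnd).mp h
        omega
      ext x
      simp only [Finset.mem_insert, Finset.mem_Icc, hf, cval, hds, Nat.add_sub_cancel]
      split_ifs <;> push_cast <;> omega
    · ext x
      simp only [Finset.mem_insert, Finset.mem_Icc, hf, cval, hds, Nat.add_sub_cancel]
      split_ifs <;> push_cast <;> omega

lemma dstat_insertIdx (τ : List ℤ) (p : ℤ) {j : ℕ} (hj : 1 ≤ j) (hjl : j ≤ τ.length + 1) :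
    dstat (τ.insertIdx (j-1) p) j =
      dstat τ j + (if j ≤ τ.length ∧ τ.getD (j-1) 0 < p then 1 else 0) := by
  classical
  have ht : j - 1 ≤ τ.length := by omega
  rw [dstat, descSet_insertIdx τ p ht, Finset.filter_union, Finset.filter_union,
    Finset.filter_union]
  have f1 : ((descSet τ).filter (fun i => i < j-1)).filter (fun i => j ≤ i) = ∅ := by
    ext x
    simp only [Finset.mem_filter, Finset.notMem_empty, iff_false]
    rintro ⟨⟨-, h1⟩, h2⟩
    omega
  have f2 : (((descSet τ).filter (fun i => j-1 < i)).image (fun i => i + 1)).filter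
      (fun i => j ≤ i) = ((descSet τ).filter (fun i => j-1 < i)).image (fun i => i + 1) := by
    apply Finset.filter_true_of_mem
    intro x hx
    obtain ⟨i, hi, rfl⟩ := Finset.mem_image.mp hx
    have := (Finset.mem_filter.mp hi).2
    omega
  have f3 : ((if 1 ≤ j-1 ∧ p < τ.getD (j-1-1) 0 then ({j-1} : Finset ℕ) else ∅)).filter
      (fun i => j ≤ i) = ∅ := by
    split_ifs
    · rw [Finset.filter_singleton, if_neg (by omega)]
    · rw [Finset.filter_empty]
  have f4 : ((if j-1 < τ.length ∧ τ.getD (j-1) 0 < p then ({j-1+1} : Finset ℕ) else ∅)).filter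
      (fun i => j ≤ i) =
      (if j ≤ τ.length ∧ τ.getD (j-1) 0 < p then ({j} : Finset ℕ) else ∅) := by
    have he : j - 1 + 1 = j := by omega
    have hc : (j-1 < τ.length ∧ τ.getD (j-1) 0 < p) ↔ (j ≤ τ.length ∧ τ.getD (j-1) 0 < p) := by
      constructor <;> rintro ⟨h1, h2⟩ <;> exact ⟨by omega, h2⟩
    rw [he]
    split_ifs with h1 h2 h2
    · rw [Finset.filter_singleton, if_pos (le_refl j)]
    · exact absurd (hc.mp h1) h2
    · exact absurd (hc.mpr h2) h1
    · rw [Finset.filter_empty]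
  rw [f1, f2, f3, f4]
  rw [Finset.empty_union, Finset.empty_union]
  have hdisj : Disjoint (((descSet τ).filter (fun i => j-1 < i)).image (fun i => i + 1))
      (if j ≤ τ.length ∧ τ.getD (j-1) 0 < p then ({j} : Finset ℕ) else ∅) := by
    rw [Finset.disjoint_left]
    intro x hx hy
    obtain ⟨i, hi, rfl⟩ := Finset.mem_image.mp hx
    have := (Finset.mem_filter.mp hi).2
    split_ifs at hy
    · simp only [Finset.mem_singleton] at hy; omega
    · simp at hy
  rw [Finset.card_union_of_disjoint hdisj,
    Finset.card_image_of_injOn (fun x _ y _ h => by omega)]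
  congr 1
  · rw [dstat]
    congr 1
    ext x
    simp only [Finset.mem_filter]
    constructor
    · rintro ⟨h, h'⟩; exact ⟨h, by omega⟩
    · rintro ⟨h, h'⟩; exact ⟨h, by omega⟩
  · split_ifs <;> simp


/-- Lemma 4.1: for τ a word of n-1 distinct integers, p ≠ q not appearing in τ, and
j ∈ {1,...,n}, the set of the first j entries of MIS(τⱼᵖ, q) equals the set of the
first j entries of MIS(τ, p), each increased by 1 if q > p (and unchanged if q < p). -/
theorem mis_insertion_lemma (n : ℕ) (τ : List ℤ) (hnd : τ.Nodup)
    (hlen : τ.length + 1 = n) (p q : ℤ) (hpq : p ≠ q) (hp : p ∉ τ) (hq : q ∉ τ)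
    (j : ℕ) (hj1 : 1 ≤ j) (hjn : j ≤ n) :
    (Finset.Icc 1 j).image (fun i => mi (τ.insertIdx (j - 1) p) i q) =
      (Finset.Icc 1 j).image (fun i => mi τ i p + (if p < q then 1 else 0)) := by
  have ht : j - 1 ≤ τ.length := by omega
  have hwlen : (τ.insertIdx (j - 1) p).length = τ.length + 1 :=
    List.length_insertIdx_of_le_length ht _
  have hwnd : (τ.insertIdx (j - 1) p).Nodup :=
    (List.perm_insertIdx p τ ht).nodup_iff.mpr (List.nodup_cons.mpr ⟨hp, hnd⟩)
  have hqw : q ∉ τ.insertIdx (j - 1) p := by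
    intro hqin
    rcases (List.mem_insertIdx ht).mp hqin with h | h
    · exact hpq h.symm
    · exact hq h
  have hLHS := lemA (τ.insertIdx (j - 1) p) hwnd q hqw j hj1 (by omega)
  have hRHS := lemA τ hnd p hp j hj1 (by omega)
  have hgw : (τ.insertIdx (j - 1) p).getD (j-1) 0 = p := by
    rw [List.getD_eq_getElem _ _ (by omega), List.getElem_insertIdx_self (by omega)]
  have hcond : (j ≤ (τ.insertIdx (j - 1) p).length ∧ (τ.insertIdx (j - 1) p).getD (j-1) 0 < q)
      ↔ p < q := by
    rw [hgw]
    exact ⟨fun h => h.2, fun h => ⟨by omega, h⟩⟩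
  have hdw := dstat_insertIdx τ p hj1 (by omega)
  have hcv : cval (τ.insertIdx (j - 1) p) j q = cval τ j p + (if p < q then (1:ℤ) else 0) := by
    rw [cval, cval, hdw]
    simp only [hcond]
    split_ifs <;> push_cast <;> ring
  have h2 : (Finset.Icc 1 j).image (fun i => mi τ i p + (if p < q then (1:ℤ) else 0)) =
      ((Finset.Icc 1 j).image (fun k => mi τ k p)).image
        (fun x => x + (if p < q then (1:ℤ) else 0)) := by
    rw [Finset.image_image]
    rfl
  have h3 : ((Finset.Icc (cval τ j p) (cval τ j p + (j:ℤ) - 1)).image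
      (fun x => x + (if p < q then (1:ℤ) else 0))) =
      Finset.Icc (cval τ j p + (if p < q then (1:ℤ) else 0))
        (cval τ j p + (j:ℤ) - 1 + (if p < q then (1:ℤ) else 0)) := by
    ext x
    simp only [Finset.mem_image, Finset.mem_Icc]
    constructor
    · rintro ⟨y, ⟨hy1, hy2⟩, rfl⟩
      constructor <;> omega
    · rintro ⟨h1, h2⟩
      exact ⟨x - (if p < q then (1:ℤ) else 0), ⟨by omega, by omega⟩, by ring⟩
  rw [hLHS, h2, hRHS, h3, hcv]
  congr 1
  ring
end

section
/- Let n = a + b, let θ be a word of length b and π a word of length a on complementary subsets of [n], and let σ ∈ S(θ,π). With the insertion construction, set m_i = maj(σ_i) − maj(σ_{i+1}) for i = 1,...,a. Then for every i ∈ {1,...,a}, the value t_i = m_i − d_i(π) satisfies 0 ≤ t_i ≤ b. -/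
open Polynomial

/-- σ is a shuffle of θ and π: it contains θ and π as complementary subwords. -/
def IsShuffle (θ π σ : List ℤ) : Prop := θ.Sublist σ ∧ π.Sublist σ ∧ σ.Perm (θ ++ π)

/-- Insertion construction: `subw θ π σ i` is the subword σᵢ of σ consisting of the
letters of θ together with π(i),...,π(a) (indices 1-based); `subw θ π σ (a+1) = θ`. -/
def subw (θ π σ : List ℤ) (i : ℕ) : List ℤ :=
  σ.filter (fun x => decide (x ∈ θ ∨ x ∈ π.drop (i - 1)))

/-- `kpos θ π σ i` is the (1-based) position kᵢ at which π(i) is inserted into σᵢ₊₁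
to form σᵢ, i.e. the position of the letter π(i) in σᵢ. -/
def kpos (θ π σ : List ℤ) (i : ℕ) : ℕ :=
  (subw θ π σ i).idxOf (π.getD (i - 1) 0) + 1

/-- `mstat θ π σ i` is mᵢ = maj(σᵢ) - maj(σᵢ₊₁), the increase in major index induced
by the insertion of π(i). -/
def mstat (θ π σ : List ℤ) (i : ℕ) : ℤ :=
  (maj (subw θ π σ i) : ℤ) - (maj (subw θ π σ (i + 1)) : ℤ)

namespace TBoundsAux

def ndesc : List ℤ → ℕ
  | [] => 0
  | [_] => 0
  | x :: y :: t => (if x > y then 1 else 0) + ndesc (y :: t)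

@[simp] lemma ndesc_nil : ndesc [] = 0 := rfl
@[simp] lemma ndesc_single (x : ℤ) : ndesc [x] = 0 := rfl
@[simp] lemma ndesc_cons_cons (x y : ℤ) (t : List ℤ) :
    ndesc (x :: y :: t) = (if x > y then 1 else 0) + ndesc (y :: t) := rfl

lemma ndesc_le_cons (x : ℤ) (u : List ℤ) : ndesc u ≤ ndesc (x :: u) := by
  cases u with
  | nil => simp
  | cons y t => simp only [ndesc_cons_cons]; omega

lemma ndesc_cons_mono (x a : ℤ) (u : List ℤ) : ndesc (x :: u) ≤ ndesc (x :: a :: u) := by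
  cases u with
  | nil => simp
  | cons y t =>
    simp only [ndesc_cons_cons]
    have : (if x > y then (1:ℕ) else 0) ≤ (if x > a then 1 else 0) + (if a > y then 1 else 0) := by
      split_ifs <;> omega
    omega

lemma ndesc_cons_cons_le (x a : ℤ) (u : List ℤ) : ndesc (x :: a :: u) ≤ ndesc (x :: u) + 1 := by
  cases u with
  | nil => simp; split_ifs <;> omega
  | cons y t =>
    simp only [ndesc_cons_cons]
    have : (if x > a then (1:ℕ) else 0) + (if a > y then 1 else 0) ≤ (if x > y then 1 else 0) + 1 := by
      split_ifs <;> omega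
    omega

lemma ndesc_insertIdx (u : List ℤ) : ∀ (m : ℕ) (r : ℤ),
    ndesc u ≤ ndesc (u.insertIdx m r) ∧ ndesc (u.insertIdx m r) ≤ ndesc u + 1 := by
  induction u with
  | nil =>
    intro m r
    cases m with
    | zero => simp
    | succ m => simp [List.insertIdx]
  | cons x t ih =>
    intro m r
    cases m with
    | zero =>
      rw [List.insertIdx_zero]
      refine ⟨ndesc_le_cons r (x :: t), ?_⟩
      cases t <;> simp only [ndesc_cons_cons, ndesc_single] <;> split_ifs <;> omega
    | succ m =>
      rw [List.insertIdx_succ_cons]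
      cases t with
      | nil =>
        cases m with
        | zero => constructor <;> simp <;> split_ifs <;> omega
        | succ m => simp [List.insertIdx]
      | cons y s =>
        cases m with
        | zero =>
          rw [List.insertIdx_zero]
          exact ⟨ndesc_cons_mono x r (y :: s), ndesc_cons_cons_le x r (y :: s)⟩
        | succ m =>
          rw [List.insertIdx_succ_cons]
          have h := ih (m+1) r
          rw [List.insertIdx_succ_cons] at h
          simp only [ndesc_cons_cons]
          omega


lemma ndesc_cons_sublist {p u : List ℤ} (h : p.Sublist u) :
    ∀ x, ndesc (x :: p) ≤ ndesc (x :: u) := by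
  induction h with
  | slnil => intro x; exact le_refl _
  | cons a h ih => intro x; exact (ih x).trans (ndesc_cons_mono x a _)
  | cons_cons a h ih =>
    intro x
    simp only [ndesc_cons_cons]
    exact Nat.add_le_add_left (ih a) _

lemma ndesc_sublist {p u : List ℤ} (h : p.Sublist u) : ndesc p ≤ ndesc u := by
  induction h with
  | slnil => exact le_refl _
  | cons a h ih => exact ih.trans (ndesc_le_cons a _)
  | cons_cons a h ih => exact ndesc_cons_sublist h a

lemma ndesc_cons_upper {p u : List ℤ} (h : p.Sublist u) :
    ∀ x, ndesc (x :: u) ≤ ndesc (x :: p) + (u.length - p.length) := by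
  induction h with
  | slnil => intro x; simp
  | @cons p' u' a h ih =>
    intro x
    have h1 := ndesc_cons_cons_le x a u'
    have h2 := ih x
    have h3 := h.length_le
    simp only [List.length_cons]
    omega
  | cons_cons a h ih =>
    intro x
    simp only [ndesc_cons_cons, List.length_cons]
    have := ih a
    have h3 := h.length_le
    omega

lemma sublist_of_cons_first {x : ℤ} :
    ∀ (s₁ : List ℤ) {p s₂ : List ℤ}, (x :: p).Sublist (s₁ ++ x :: s₂) → x ∉ s₁ → p.Sublist s₂ := by
  intro s₁
  induction s₁ with
  | nil =>
    intro p s₂ h _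
    exact List.cons_sublist_cons.mp h
  | cons a t ih =>
    intro p s₂ h hx
    rcases List.sublist_cons_iff.mp h with h' | ⟨r, hr, hr'⟩
    · exact ih h' (fun hm => hx (List.mem_cons_of_mem a hm))
    · exfalso
      injection hr with h1 _
      subst h1
      exact hx List.mem_cons_self

lemma insertIdx_append (A B : List ℤ) (c : ℤ) : (A ++ B).insertIdx A.length c = A ++ c :: B := by
  induction A with
  | nil => simp
  | cons a t ih => simpa [List.insertIdx_succ_cons] using ih


lemma ndesc_eq_sum (u : List ℤ) :
    ndesc u = ∑ j ∈ Finset.range (u.length - 1),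
      if u.getD j 0 > u.getD (j+1) 0 then 1 else 0 := by
  induction u with
  | nil => simp
  | cons x t ih =>
    cases t with
    | nil => simp
    | cons y s =>
      rw [show (x::y::s).length - 1 = ((y::s).length - 1) + 1 by simp]
      rw [Finset.sum_range_succ']
      simp only [List.getD_cons_succ, List.getD_cons_zero, ndesc_cons_cons]
      simp only [List.getD_cons_succ] at ih
      rw [ih]
      exact Nat.add_comm _ _

lemma icc_eq_ico (L : ℕ) : Finset.Icc 1 (L - 1) = Finset.Ico 1 L := by
  ext i; simp only [Finset.mem_Icc, Finset.mem_Ico]; omega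

lemma maj_eq_sum (w : List ℤ) :
    maj w = ∑ j ∈ Finset.range (w.length - 1),
      (j+1) * (if w.getD j 0 > w.getD (j+1) 0 then 1 else 0) := by
  unfold maj descSet
  rw [Finset.sum_filter, icc_eq_ico, Finset.sum_Ico_eq_sum_range]
  rw [show w.length - 1 = w.length - 1 from rfl]
  apply Finset.sum_congr rfl
  intro j _
  rw [show 1 + j - 1 = j by omega, show 1 + j = j + 1 by omega]
  split_ifs <;> omega

lemma dstat_eq_sum (w : List ℤ) (k : ℕ) :
    dstat w k = ∑ j ∈ Finset.range (w.length - 1),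
      if k ≤ j + 1 ∧ w.getD j 0 > w.getD (j+1) 0 then 1 else 0 := by
  unfold dstat descSet
  rw [Finset.filter_filter, Finset.card_filter]
  rw [icc_eq_ico, Finset.sum_Ico_eq_sum_range]
  apply Finset.sum_congr rfl
  intro j _
  rw [show 1 + j - 1 = j by omega, show 1 + j = j + 1 by omega]
  by_cases h1 : w.getD j 0 > w.getD (j+1) 0 <;> by_cases h2 : k ≤ j + 1 <;> simp [h1, h2]

lemma maj_cons (x : ℤ) (w : List ℤ) : maj (x :: w) = maj w + ndesc (x :: w) := by
  cases w with
  | nil => simp [maj, descSet]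
  | cons y t =>
    rw [maj_eq_sum (x :: y :: t), maj_eq_sum (y :: t)]
    simp only [ndesc_cons_cons]
    rw [ndesc_eq_sum (y :: t)]
    rw [show (x::y::t).length - 1 = ((y::t).length - 1) + 1 by simp]
    rw [Finset.sum_range_succ']
    simp only [List.getD_cons_succ, List.getD_cons_zero, ndesc_cons_cons]
    have hsplit : ∑ j ∈ Finset.range ((y::t).length - 1),
        (j+1+1) * (if (y::t).getD j 0 > t.getD j 0 then 1 else 0)
        = ∑ j ∈ Finset.range ((y::t).length - 1),
          ((j+1) * (if (y::t).getD j 0 > t.getD j 0 then 1 else 0)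
          + (if (y::t).getD j 0 > t.getD j 0 then 1 else 0)) := by
      exact Finset.sum_congr rfl (fun j _ => by ring)
    rw [hsplit, Finset.sum_add_distrib]
    ring

lemma maj_eq_sum_ndesc (w : List ℤ) :
    maj w = ∑ k ∈ Finset.range w.length, ndesc (w.drop k) := by
  induction w with
  | nil => simp [maj, descSet]
  | cons x t ih =>
    rw [maj_cons, ih, List.length_cons, Finset.sum_range_succ']
    simp only [List.drop_succ_cons, List.drop_zero]

lemma dstat_cons_succ (x : ℤ) (w : List ℤ) (k : ℕ) :
    dstat (x :: w) (k+2) = dstat w (k+1) := by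
  cases w with
  | nil => simp [dstat, descSet]
  | cons y t =>
    rw [dstat_eq_sum, dstat_eq_sum]
    rw [show (x::y::t).length - 1 = ((y::t).length - 1) + 1 by simp]
    rw [Finset.sum_range_succ']
    simp only [List.getD_cons_succ, List.getD_cons_zero]
    rw [show (if k + 2 ≤ 0 + 1 ∧ x > y then 1 else 0) = 0 by simp]
    rw [add_zero]
    apply Finset.sum_congr rfl
    intro j _
    have : (k + 2 ≤ j + 1 + 1) ↔ (k + 1 ≤ j + 1) := by omega
    simp [this]

lemma dstat_one (w : List ℤ) : dstat w 1 = ndesc w := by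
  rw [dstat_eq_sum, ndesc_eq_sum]
  apply Finset.sum_congr rfl
  intro j _
  have : (1 ≤ j + 1) := by omega
  simp [this]

lemma dstat_drop (w : List ℤ) : ∀ k, dstat w (k+1) = ndesc (w.drop k) := by
  induction w with
  | nil => intro k; simp [dstat, descSet]
  | cons x t ih =>
    intro k
    cases k with
    | zero => simpa using dstat_one (x :: t)
    | succ k => rw [dstat_cons_succ, ih k, List.drop_succ_cons]


lemma drop_insertIdx_of_le (r : ℤ) :
    ∀ (u : List ℤ) (m k : ℕ), k ≤ m → m ≤ u.length →
      (u.insertIdx m r).drop k = (u.drop k).insertIdx (m - k) r := by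
  intro u
  induction u with
  | nil =>
    intro m k hk hm
    simp only [List.length_nil, Nat.le_zero] at hm
    subst hm
    simp only [Nat.le_zero] at hk
    subst hk
    simp
  | cons x t ih =>
    intro m k hk hm
    cases k with
    | zero => simp
    | succ k =>
      cases m with
      | zero => omega
      | succ m =>
        rw [List.insertIdx_succ_cons, List.drop_succ_cons, List.drop_succ_cons,
          Nat.succ_sub_succ]
        exact ih m k (by omega) (by simpa using hm)

lemma drop_insertIdx_of_gt (r : ℤ) :
    ∀ (u : List ℤ) (m k : ℕ), m < k → m ≤ u.length →
      (u.insertIdx m r).drop k = u.drop (k-1) := by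
  intro u
  induction u with
  | nil =>
    intro m k hmk hm
    simp only [List.length_nil, Nat.le_zero] at hm
    subst hm
    cases k with
    | zero => omega
    | succ k => simp
  | cons x t ih =>
    intro m k hmk hm
    cases m with
    | zero =>
      rw [List.insertIdx_zero]
      cases k with
      | zero => omega
      | succ k => simp
    | succ m =>
      cases k with
      | zero => omega
      | succ k =>
        rw [List.insertIdx_succ_cons, List.drop_succ_cons, Nat.succ_sub_one]
        rw [ih m k (by omega) (by simpa using hm)]
        cases k with
        | zero => omega
        | succ k => rw [Nat.succ_sub_one, List.drop_succ_cons]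

lemma insert_master (w : List ℤ) (r : ℤ) (m : ℕ) (hm : m ≤ w.length) :
    maj w + dstat (w.insertIdx m r) (m+1) ≤ maj (w.insertIdx m r) ∧
    maj (w.insertIdx m r) ≤ maj w + dstat (w.insertIdx m r) (m+1) + m := by
  set v := w.insertIdx m r with hv
  set L := w.length with hL
  have hlen : v.length = L + 1 := List.length_insertIdx_of_le_length hm r
  have hdv : dstat v (m+1) = ndesc (v.drop m) := dstat_drop v m
  -- decompose maj v
  have h1 : maj v = (∑ k ∈ Finset.range m, ndesc (v.drop k)) + ndesc (v.drop m)
      + (∑ k ∈ Finset.Ico (m+1) (L+1), ndesc (v.drop k)) := by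
    rw [maj_eq_sum_ndesc, hlen, Finset.range_eq_Ico,
      ← Finset.sum_Ico_consecutive _ (Nat.zero_le (m+1)) (by omega : m+1 ≤ L+1),
      ← Finset.range_eq_Ico, Finset.sum_range_succ]
  have h2 : maj w = (∑ k ∈ Finset.range m, ndesc (w.drop k))
      + (∑ k ∈ Finset.Ico m L, ndesc (w.drop k)) := by
    rw [maj_eq_sum_ndesc, ← hL, Finset.range_eq_Ico,
      ← Finset.sum_Ico_consecutive _ (Nat.zero_le m) (by omega : m ≤ L),
      ← Finset.range_eq_Ico]
  have htail : (∑ k ∈ Finset.Ico (m+1) (L+1), ndesc (v.drop k))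
      = ∑ k ∈ Finset.Ico m L, ndesc (w.drop k) := by
    rw [Finset.sum_Ico_eq_sum_range, Finset.sum_Ico_eq_sum_range]
    rw [show L + 1 - (m+1) = L - m by omega]
    apply Finset.sum_congr rfl
    intro j _
    rw [hv, drop_insertIdx_of_gt r w m (m+1+j) (by omega) hm]
    rw [show m+1+j-1 = m+j by omega]
  have hdelta : ∀ k ∈ Finset.range m,
      ndesc (w.drop k) ≤ ndesc (v.drop k) ∧ ndesc (v.drop k) ≤ ndesc (w.drop k) + 1 := by
    intro k hk
    rw [Finset.mem_range] at hk
    rw [hv, drop_insertIdx_of_le r w m k (by omega) hm]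
    exact ndesc_insertIdx (w.drop k) (m-k) r
  have hlow : (∑ k ∈ Finset.range m, ndesc (w.drop k))
      ≤ ∑ k ∈ Finset.range m, ndesc (v.drop k) :=
    Finset.sum_le_sum (fun k hk => (hdelta k hk).1)
  have hhigh : (∑ k ∈ Finset.range m, ndesc (v.drop k))
      ≤ (∑ k ∈ Finset.range m, ndesc (w.drop k)) + m := by
    calc (∑ k ∈ Finset.range m, ndesc (v.drop k))
        ≤ ∑ k ∈ Finset.range m, (ndesc (w.drop k) + 1) :=
          Finset.sum_le_sum (fun k hk => (hdelta k hk).2)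
      _ = (∑ k ∈ Finset.range m, ndesc (w.drop k)) + m := by
          rw [Finset.sum_add_distrib]; simp
  omega

end TBoundsAux

open TBoundsAux in
/-- Corollary to Proposition 4.1: for every i ∈ {1,...,a}, tᵢ = mᵢ - dᵢ(π)
satisfies 0 ≤ tᵢ ≤ b. -/
theorem t_bounds (n a b : ℕ) (hn : n = a + b) (θ π : List ℤ)
    (hθ : θ.length = b) (hπ : π.length = a) (hperm : (θ ++ π).Perm (W n))
    (σ : List ℤ) (hσ : IsShuffle θ π σ) (i : ℕ) (hi1 : 1 ≤ i) (hia : i ≤ a) :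
    0 ≤ mstat θ π σ i - (dstat π i : ℤ) ∧ mstat θ π σ i - (dstat π i : ℤ) ≤ (b : ℤ) := by
  obtain ⟨hθσ, hπσ, hσperm⟩ := hσ
  obtain ⟨j, rfl⟩ : ∃ j, i = j + 1 := ⟨i - 1, by omega⟩
  have hja : j < a := by omega
  -- nodup facts
  have hWnd : (W n).Nodup := by
    unfold W
    simp only [List.pure_def, List.bind_eq_flatMap, List.flatMap_singleton', ← List.map_eq_flatMap]
    rw [List.map_map]
    refine List.Nodup.map ?_ List.nodup_range
    intro p q h; simpa using h
  have hθπ : (θ ++ π).Nodup := hperm.nodup_iff.mpr hWnd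
  have hσnd : σ.Nodup := hσperm.nodup_iff.mpr hθπ
  rw [List.nodup_append] at hθπ
  obtain ⟨hθnd, hπnd, hdisj⟩ := hθπ
  -- the letter c = π(j+1) (1-based), π[j] (0-based)
  have hjlen : j < π.length := by omega
  set c := π.getD j 0 with hc
  have hcget : c = π[j] := List.getD_eq_getElem π 0 hjlen
  have hdropj : π.drop j = c :: π.drop (j+1) := by
    rw [hcget]; exact List.drop_eq_getElem_cons hjlen
  have hcπ : c ∈ π := hcget ▸ List.getElem_mem hjlen
  have hcθ : c ∉ θ := fun h => hdisj c h c hcπ rfl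
  have hcdropj1 : c ∉ π.drop (j+1) := by
    have hnd : (π.drop j).Nodup := hπnd.sublist (List.drop_sublist j π)
    rw [hdropj, List.nodup_cons] at hnd
    exact hnd.1
  have hcσ : c ∈ σ := hπσ.subset hcπ
  obtain ⟨s₁, s₂, rfl⟩ := List.append_of_mem hcσ
  have hcs : c ∉ s₁ ∧ c ∉ s₂ := by
    rw [List.nodup_append, List.nodup_cons] at hσnd
    exact ⟨fun h => hσnd.2.2 c h c List.mem_cons_self rfl, hσnd.2.1.1⟩
  -- predicates
  set P : ℤ → Bool := fun x => decide (x ∈ θ ∨ x ∈ π.drop j) with hP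
  set Q : ℤ → Bool := fun x => decide (x ∈ θ ∨ x ∈ π.drop (j+1)) with hQ
  have hPQ : ∀ x, x ≠ c → P x = Q x := by
    intro x hx
    simp only [hP, hQ, hdropj, List.mem_cons, decide_eq_decide]
    tauto
  set A := s₁.filter Q with hA
  set B := s₂.filter Q with hB
  have hPc : P c = true := by
    simp only [hP, decide_eq_true_eq, hdropj, List.mem_cons]
    tauto
  have hfilterP : ∀ s : List ℤ, c ∉ s → s.filter P = s.filter Q := by
    intro s hs
    exact List.filter_congr (fun x hx => hPQ x (fun h => hs (h ▸ hx)))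
  -- identify the two subwords
  have hsubw1 : subw θ π (s₁ ++ c :: s₂) (j+1) = A ++ c :: B := by
    show (s₁ ++ c :: s₂).filter P = A ++ c :: B
    rw [List.filter_append, List.filter_cons]
    rw [hfilterP s₁ hcs.1, hfilterP s₂ hcs.2, hPc]
    simp
    rfl
  have hsubw2 : subw θ π (s₁ ++ c :: s₂) (j+2) = A ++ B := by
    show (s₁ ++ c :: s₂).filter Q = A ++ B
    rw [List.filter_append, List.filter_cons]
    have hQc : Q c = false := by
      simp only [hQ, decide_eq_false_iff_not]
      tauto
    rw [hQc]
    simp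
    rfl
  -- main inequality via insert_master
  have hmle : A.length ≤ (A ++ B).length := by simp
  have hins := insert_master (A ++ B) c A.length (by simp)
  rw [insertIdx_append] at hins
  have hdv : dstat (A ++ c :: B) (A.length + 1) = ndesc (c :: B) := by
    rw [dstat_drop]
    congr 1
    exact List.drop_left
  -- dstat π (j+1) = ndesc (c :: π.drop (j+1))
  have hdπ : dstat π (j+1) = ndesc (c :: π.drop (j+1)) := by
    rw [dstat_drop, hdropj]
  -- π.drop (j+1) is a sublist of B
  have hsubB : (π.drop (j+1)).Sublist B := by
    have h1 : (π.drop j).Sublist (s₁ ++ c :: s₂) := (List.drop_sublist j π).trans hπσ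
    have h2 : ((π.drop j).filter P).Sublist ((s₁ ++ c :: s₂).filter P) := h1.filter P
    have h3 : (π.drop j).filter P = π.drop j := by
      rw [List.filter_eq_self]
      intro x hx
      simp only [hP, decide_eq_true_eq]
      exact Or.inr hx
    rw [h3] at h2
    have h4 : (π.drop j).Sublist (subw θ π (s₁ ++ c :: s₂) (j+1)) := h2
    rw [hsubw1, hdropj] at h4
    replace h2 := h4
    have hcA : c ∉ A := fun h => hcs.1 (List.mem_of_mem_filter h)
    exact sublist_of_cons_first A h2 hcA
  have hlow : ndesc (c :: π.drop (j+1)) ≤ ndesc (c :: B) := ndesc_cons_sublist hsubB c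
  have hup : ndesc (c :: B) ≤ ndesc (c :: π.drop (j+1)) + (B.length - (π.drop (j+1)).length) :=
    ndesc_cons_upper hsubB c
  have hlenB : (π.drop (j+1)).length ≤ B.length := hsubB.length_le
  have hdlen : (π.drop (j+1)).length = a - (j+1) := by simp [hπ]
  -- total length bound
  have hvnd : (A ++ c :: B).Nodup := by
    rw [← hsubw1]
    exact hσnd.filter _
  have hvsubset : (A ++ c :: B) ⊆ θ ++ π.drop j := by
    intro x hx
    rw [← hsubw1] at hx
    have hx2 := List.of_mem_filter hx
    simp only [decide_eq_true_eq] at hx2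
    rw [show j+1-1 = j from rfl] at hx2
    rw [List.mem_append]
    exact hx2
  have hvlen : (A ++ c :: B).length ≤ b + (a - j) := by
    have := (hvnd.subperm hvsubset).length_le
    simpa [hθ, hπ] using this
  -- finish
  have hms : mstat θ π (s₁ ++ c :: s₂) (j+1)
      = (maj (A ++ c :: B) : ℤ) - (maj (A ++ B) : ℤ) := by
    unfold mstat
    rw [hsubw1, show j+1+1 = j+2 from rfl, hsubw2]
  rw [hms, hdπ]
  rw [hdv] at hins
  have hABl : (A ++ c :: B).length = A.length + 1 + B.length := by simp; omega
  omega
end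

section
/- Let n = a + b, let θ be a word of length b and π a word of length a on complementary subsets of [n], and let σ ∈ S(θ,π). With t_i = m_i − d_i(π) and m_i = maj(σ_i) − maj(σ_{i+1}) from the insertion construction, one has maj(σ) = maj(θ) + maj(π) + Σ_{i=1}^{a} t_i. -/
open Polynomial

lemma coeM_eq (l : List ℕ) :
    (do let a ← l; pure ((a:ℤ)) : List ℤ) = l.map (fun a : ℕ => (a:ℤ)) := by
  induction l with
  | nil => rfl
  | cons x xs ih => simp_all [List.bind_eq_flatMap]

lemma W_eq (n : ℕ) : W n = (List.range n).map (fun i : ℕ => (i:ℤ)+1) := by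
  show List.map _ (do let a ← List.range n; pure ((a:ℤ))) = _
  rw [coeM_eq, List.map_map]
  rfl

lemma W_nodup (n : ℕ) : (W n).Nodup := by
  rw [W_eq]
  refine List.Nodup.map ?_ List.nodup_range
  intro x y h
  simp only at h
  omega

lemma telescope (g : ℕ → ℤ) (a : ℕ) :
    ∑ i ∈ Finset.Icc 1 a, (g i - g (i+1)) = g 1 - g (a+1) := by
  rw [← Finset.Ico_add_one_right_eq_Icc, Finset.sum_Ico_eq_sum_range]
  have := Finset.sum_range_sub' (fun i => g (i+1)) a
  convert this using 2 with i
  · simp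
  · ring_nf

lemma dsum (π : List ℤ) (a : ℕ) (hπ : π.length = a) :
    ∑ i ∈ Finset.Icc 1 a, dstat π i = maj π := by
  unfold dstat maj
  simp only [Finset.card_filter]
  rw [Finset.sum_comm]
  refine Finset.sum_congr rfl ?_
  intro j hj
  have hj' : 1 ≤ j ∧ j ≤ a - 1 := by
    simp [descSet, hπ, Finset.mem_filter, Finset.mem_Icc] at hj
    exact ⟨hj.1.1, hj.1.2⟩
  rw [← Finset.card_filter]
  have : (Finset.Icc 1 a).filter (fun x => x ≤ j) = Finset.Icc 1 j := by
    ext x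
    simp [Finset.mem_filter, Finset.mem_Icc]
    omega
  rw [this, Nat.card_Icc]
  omega

/-- Property (5): maj(σ) = maj(θ) + maj(π) + Σᵢ tᵢ, where tᵢ = mᵢ - dᵢ(π). -/
theorem maj_decomposition (n a b : ℕ) (hn : n = a + b) (θ π : List ℤ)
    (hθ : θ.length = b) (hπ : π.length = a) (hperm : (θ ++ π).Perm (W n))
    (σ : List ℤ) (hσ : IsShuffle θ π σ) :
    (maj σ : ℤ) = (maj θ : ℤ) + (maj π : ℤ) +
      ∑ i ∈ Finset.Icc 1 a, (mstat θ π σ i - (dstat π i : ℤ)) := by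
  obtain ⟨hθs, hπs, hp⟩ := hσ
  have hnodup : (θ ++ π).Nodup := hperm.nodup_iff.mpr (W_nodup n)
  have hdisj : ∀ x ∈ π, x ∉ θ := by
    rw [List.nodup_append] at hnodup
    intro x hx hx'
    exact hnodup.2.2 x hx' x hx rfl
  -- σ₁ = σ
  have hsub1 : subw θ π σ 1 = σ := by
    unfold subw
    simp only [Nat.sub_self, List.drop_zero]
    rw [List.filter_eq_self]
    intro x hx
    have : x ∈ θ ++ π := hp.mem_iff.mp hx
    simp only [List.mem_append] at this
    simpa using this
  -- σ_{a+1} = θ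
  have hsubtop : subw θ π σ (a + 1) = θ := by
    unfold subw
    have hdrop : π.drop (a + 1 - 1) = [] := by
      simp [List.drop_eq_nil_iff, hπ]
    rw [hdrop]
    simp only [List.not_mem_nil, or_false]
    have h1 : θ.Sublist (σ.filter (fun x => decide (x ∈ θ))) := by
      have := hθs.filter (fun x => decide (x ∈ θ))
      rwa [List.filter_eq_self.mpr (by intro x hx; simpa using hx)] at this
    refine (h1.eq_of_length ?_).symm
    rw [← List.countP_eq_length_filter, hp.countP_eq, List.countP_append]
    have h2 : θ.countP (fun x => decide (x ∈ θ)) = θ.length := by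
      rw [List.countP_eq_length]
      intro x hx; simpa using hx
    have h3 : π.countP (fun x => decide (x ∈ θ)) = 0 := by
      rw [List.countP_eq_zero]
      intro x hx
      simpa using hdisj x hx
    omega
  have ht : ∑ i ∈ Finset.Icc 1 a, mstat θ π σ i
      = (maj σ : ℤ) - (maj θ : ℤ) := by
    have := telescope (fun i => (maj (subw θ π σ i) : ℤ)) a
    rw [show (∑ i ∈ Finset.Icc 1 a, mstat θ π σ i)
        = ∑ i ∈ Finset.Icc 1 a,
          ((maj (subw θ π σ i) : ℤ) - (maj (subw θ π σ (i+1)) : ℤ)) from rfl,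
      this, hsub1, hsubtop]
  have hd : ∑ i ∈ Finset.Icc 1 a, (dstat π i : ℤ) = (maj π : ℤ) := by
    rw [← Nat.cast_sum, dsum π a hπ]
  rw [Finset.sum_sub_distrib, ht, hd]
  ring
end

section
/- (MacMahon) Let T be the multiset {1^{a_1}, 2^{a_2}, ..., k^{a_k}} with a_1 + ... + a_k = n, and let P(T) be the set of all words that are permutations of T. Then Σ_{σ ∈ P(T)} q^{maj(σ)} = [n; a_1, ..., a_k]_q, the q-multinomial coefficient, as an identity of polynomials in q. -/
open Polynomial

abbrev List.Sorted {α : Type*} (R : α → α → Prop) (l : List α) : Prop := List.Pairwise R l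

namespace Mac

open List Finset

def R (p q : ℤ × ℕ) : Prop := q.2 < p.2 ∨ (p.2 = q.2 ∧ p.1 ≤ q.1)

instance : DecidableRel R := fun p q => by unfold R; infer_instance

instance : IsTrans (ℤ × ℕ) R := ⟨by intro a b c hab hbc; unfold R at *; omega⟩

instance : IsAntisymm (ℤ × ℕ) R := ⟨by
  intro a b hab hba; unfold R at *
  have : a.1 = b.1 ∧ a.2 = b.2 := by omega
  exact Prod.ext this.1 this.2⟩

instance : IsTotal (ℤ × ℕ) R := ⟨by intro a b; unfold R; omega⟩

/-- lists of naturals with given length and sum -/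
def comps (m M : ℕ) : Finset (List ℕ) := (Finset.Nat.antidiagonalTuple m M).image List.ofFn

lemma mem_comps {m M : ℕ} {l : List ℕ} : l ∈ comps m M ↔ l.length = m ∧ l.sum = M := by
  constructor
  · intro h
    obtain ⟨f, hf, rfl⟩ := Finset.mem_image.1 h
    rw [Finset.Nat.mem_antidiagonalTuple] at hf
    simp [List.sum_ofFn, hf]
  · rintro ⟨h1, h2⟩
    subst h1
    refine Finset.mem_image.2 ⟨fun i => l.get i, ?_, ?_⟩
    · rw [Finset.Nat.mem_antidiagonalTuple, ← h2, ← List.sum_ofFn]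
      congr 1
      exact List.ofFn_get l
    · exact List.ofFn_get l

/-- antitone lists (partitions with ≤ m parts, as weakly decreasing lists) -/
def anti (m M : ℕ) : Finset (List ℕ) := (comps m M).filter (fun l => List.Sorted (· ≥ ·) l)

lemma mem_anti {m M : ℕ} {l : List ℕ} :
    l ∈ anti m M ↔ l.length = m ∧ l.sum = M ∧ List.Sorted (· ≥ ·) l := by
  simp [anti, mem_comps, and_assoc]

/-- generating function for partitions with at most m parts -/
noncomputable def Pgf (m : ℕ) : PowerSeries ℚ := PowerSeries.mk fun M => ((anti m M).card : ℚ)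

/-- compatible value-lists for a word σ, with total sum M -/
def Cs (σ : List ℤ) (M : ℕ) : Finset (List ℕ) :=
  (comps σ.length M).filter (fun t => List.Sorted R (σ.zip t))

lemma mem_Cs {σ : List ℤ} {M : ℕ} {t : List ℕ} :
    t ∈ Cs σ M ↔ t.length = σ.length ∧ t.sum = M ∧ List.Sorted R (σ.zip t) := by
  simp [Cs, mem_comps, and_assoc]

lemma zip_map_fst_snd (l : List (ℤ × ℕ)) : (l.map Prod.fst).zip (l.map Prod.snd) = l := by
  induction l with
  | nil => rfl
  | cons a l ih => simp [ih]

lemma descSet_mem_le {σ : List ℤ} {d : ℕ} (h : d ∈ descSet σ) : 1 ≤ d ∧ d + 1 ≤ σ.length := by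
  simp only [descSet, Finset.mem_filter, Finset.mem_Icc] at h
  omega

lemma mem_descSet_succ {σ : List ℤ} {i : ℕ} (h : i + 1 < σ.length) :
    i + 1 ∈ descSet σ ↔ σ.getD (i+1) 0 < σ.getD i 0 := by
  simp only [descSet, Finset.mem_filter, Finset.mem_Icc, Nat.add_sub_cancel]
  constructor
  · tauto
  · intro hlt
    refine ⟨⟨by omega, by omega⟩, hlt⟩

lemma dstat_of_ge {σ : List ℤ} {j : ℕ} (h : σ.length ≤ j) : dstat σ j = 0 := by
  unfold dstat
  rw [Finset.card_eq_zero, Finset.filter_eq_empty_iff]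
  intro d hd
  have := descSet_mem_le hd
  omega

lemma dstat_succ (σ : List ℤ) (i : ℕ) :
    dstat σ (i+1) = dstat σ (i+2) + (if i+1 ∈ descSet σ then 1 else 0) := by
  unfold dstat
  have h1 : (descSet σ).filter (fun d => i+1 ≤ d)
      = (descSet σ).filter (fun d => i+2 ≤ d) ∪ (descSet σ).filter (fun d => d = i+1) := by
    rw [← Finset.filter_or]
    exact Finset.filter_congr (fun d _ => by omega)
  rw [h1, Finset.card_union_of_disjoint, Finset.filter_eq']
  · split <;> simp
  · rw [Finset.disjoint_left]
    intro d hd hd'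
    simp only [Finset.mem_filter] at hd hd'
    omega

lemma maj_eq_sum_dstat (σ : List ℤ) : ∑ i ∈ Finset.range σ.length, dstat σ (i+1) = maj σ := by
  unfold dstat maj
  simp_rw [Finset.card_filter]
  rw [Finset.sum_comm]
  refine Finset.sum_congr rfl fun d hd => ?_
  have hdl := descSet_mem_le hd
  rw [← Finset.card_filter]
  have : (Finset.range σ.length).filter (fun i => i + 1 ≤ d) = Finset.range d := by
    ext i
    simp only [Finset.mem_filter, Finset.mem_range]
    omega
  rw [this, Finset.card_range]

lemma compat_adj {σ : List ℤ} {t : List ℕ} (hlen : t.length = σ.length)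
    (hs : List.Sorted R (σ.zip t)) {i : ℕ} (h : i + 1 < σ.length) :
    R (σ.getD i 0, t.getD i 0) (σ.getD (i+1) 0, t.getD (i+1) 0) := by
  have hz : (σ.zip t).length = σ.length := by
    rw [List.length_zip]; omega
  have hc : R ((σ.zip t).get ⟨i, by omega⟩) ((σ.zip t).get ⟨i+1, by omega⟩) :=
    List.isChain_iff_getElem.1 (List.isChain_iff_pairwise.2 hs) i (by omega)
  have e1 : (σ.zip t).get ⟨i, by omega⟩ = (σ.getD i 0, t.getD i 0) := by
    rw [List.get_eq_getElem, List.getElem_zip]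
    rw [List.getD_eq_getElem σ 0 (by omega), List.getD_eq_getElem t 0 (by omega)]
  have e2 : (σ.zip t).get ⟨i+1, by omega⟩ = (σ.getD (i+1) 0, t.getD (i+1) 0) := by
    rw [List.get_eq_getElem, List.getElem_zip]
    rw [List.getD_eq_getElem σ 0 (by omega), List.getD_eq_getElem t 0 (by omega)]
  rwa [e1, e2] at hc

lemma compat_of_adj {σ : List ℤ} {t : List ℕ} (hlen : t.length = σ.length)
    (hadj : ∀ i, i + 1 < σ.length →
      R (σ.getD i 0, t.getD i 0) (σ.getD (i+1) 0, t.getD (i+1) 0)) :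
    List.Sorted R (σ.zip t) := by
  have hz : (σ.zip t).length = σ.length := by
    rw [List.length_zip]; omega
  rw [List.Sorted, ← List.isChain_iff_pairwise, List.isChain_iff_getElem]
  intro i hi
  have h : i + 1 < σ.length := by omega
  have e1 : (σ.zip t).get ⟨i, by omega⟩ = (σ.getD i 0, t.getD i 0) := by
    rw [List.get_eq_getElem, List.getElem_zip]
    rw [List.getD_eq_getElem σ 0 (by omega), List.getD_eq_getElem t 0 (by omega)]
  have e2 : (σ.zip t).get ⟨i+1, by omega⟩ = (σ.getD (i+1) 0, t.getD (i+1) 0) := by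
    rw [List.get_eq_getElem, List.getElem_zip]
    rw [List.getD_eq_getElem σ 0 (by omega), List.getD_eq_getElem t 0 (by omega)]
  show R ((σ.zip t).get ⟨i, by omega⟩) ((σ.zip t).get ⟨i+1, hi⟩)
  rw [e1, e2]
  exact hadj i h

lemma dstat_le_of_compat {σ : List ℤ} {t : List ℕ} (hlen : t.length = σ.length)
    (hs : List.Sorted R (σ.zip t)) :
    ∀ i, i < σ.length → dstat σ (i+1) ≤ t.getD i 0 := by
  have key : ∀ j i, i < σ.length → σ.length - i = j + 1 → dstat σ (i+1) ≤ t.getD i 0 := by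
    intro j
    induction j with
    | zero =>
      intro i hi hj
      have : σ.length ≤ i + 1 := by omega
      rw [dstat_of_ge this]
      omega
    | succ j ih =>
      intro i hi hj
      have h1 : i + 1 < σ.length := by omega
      have h2 : dstat σ (i+2) ≤ t.getD (i+1) 0 := ih (i+1) (by omega) (by omega)
      have h3 := compat_adj hlen hs h1
      rw [dstat_succ]
      by_cases hd : i + 1 ∈ descSet σ
      · rw [if_pos hd]
        rw [mem_descSet_succ h1] at hd
        unfold R at h3
        simp only at h3
        omega
      · rw [if_neg hd]
        rw [mem_descSet_succ h1] at hd
        unfold R at h3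
        simp only at h3
        omega
  intro i hi
  exact key (σ.length - i - 1) i hi (by omega)

lemma R_iff (x : ℤ) (u : ℕ) (y : ℤ) (v : ℕ) : R (x,u) (y,v) ↔ (v < u ∨ (u = v ∧ x ≤ y)) := Iff.rfl

lemma getD_ofFn_val {n : ℕ} (g : ℕ → ℕ) {i : ℕ} (h : i < n) :
    (List.ofFn (fun j : Fin n => g j.val)).getD i 0 = g i := by
  rw [List.getD_eq_getElem _ _ (by simpa using h), List.getElem_ofFn]

lemma sum_ofFn_val {n : ℕ} (g : ℕ → ℕ) :
    (List.ofFn (fun j : Fin n => g j.val)).sum = ∑ i ∈ Finset.range n, g i := by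
  rw [List.sum_ofFn]
  exact Fin.sum_univ_eq_sum_range g n

lemma sum_eq_sum_getD (l : List ℕ) : ∑ i ∈ Finset.range l.length, l.getD i 0 = l.sum := by
  have h : l = List.ofFn (fun j : Fin l.length => (fun m => l.getD m 0) j.val) := by
    refine List.ext_getElem (by simp) ?_
    intro i h1 h2
    rw [List.getElem_ofFn]
    exact (List.getD_eq_getElem l 0 h1).symm
  conv_rhs => rw [h]
  rw [sum_ofFn_val (fun m => l.getD m 0)]

lemma sorted_ge_iff_adj {l : List ℕ} :
    List.Sorted (· ≥ ·) l ↔ ∀ i, i + 1 < l.length → l.getD (i+1) 0 ≤ l.getD i 0 := by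
  rw [List.Sorted, ← List.isChain_iff_pairwise, List.isChain_iff_getElem]
  constructor
  · intro h i hi
    have := h i (by omega)
    try simp only [List.get_eq_getElem] at this
    rw [List.getD_eq_getElem _ _ (by omega : i < l.length), List.getD_eq_getElem _ _ hi]
    exact this
  · intro h i hi
    have := h i (by omega)
    try simp only [List.get_eq_getElem]
    rwa [List.getD_eq_getElem _ _ (by omega : i < l.length), List.getD_eq_getElem _ _ (by omega)] at this

lemma card_Cs (σ : List ℤ) (M : ℕ) :
    (Cs σ M).card = if maj σ ≤ M then (anti σ.length (M - maj σ)).card else 0 := by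
  by_cases hM : maj σ ≤ M
  · rw [if_pos hM]
    refine Finset.card_bij'
      (fun t' _ => List.ofFn (fun i : Fin σ.length =>
        (fun m => t'.getD m 0 - dstat σ (m+1)) i.val))
      (fun t _ => List.ofFn (fun i : Fin σ.length =>
        (fun m => t.getD m 0 + dstat σ (m+1)) i.val))
      ?_ ?_ ?_ ?_
    · -- forward membership
      intro t' ht'
      obtain ⟨hlen, hsum, hsort⟩ := mem_Cs.1 ht'
      have hb := dstat_le_of_compat hlen hsort
      refine mem_anti.2 ⟨by simp, ?_, ?_⟩
      · rw [sum_ofFn_val (fun m => t'.getD m 0 - dstat σ (m+1))]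
        rw [Finset.sum_tsub_distrib _ (fun i hi => hb i (Finset.mem_range.1 hi))]
        rw [maj_eq_sum_dstat]
        congr 1
        rw [← hsum, ← sum_eq_sum_getD t', hlen]
      · rw [sorted_ge_iff_adj]
        intro i hi
        simp only [List.length_ofFn] at hi
        rw [getD_ofFn_val (fun m => t'.getD m 0 - dstat σ (m+1)) hi,
            getD_ofFn_val (fun m => t'.getD m 0 - dstat σ (m+1)) (by omega : i < σ.length)]
        have e212 : i + 1 + 1 = i + 2 := by omega
        rw [e212]
        have h3 := compat_adj hlen hsort hi
        rw [R_iff] at h3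
        have h2 : dstat σ (i+2) ≤ t'.getD (i+1) 0 := hb (i+1) hi
        have hds := dstat_succ σ i
        by_cases hd : i + 1 ∈ descSet σ
        · rw [if_pos hd] at hds
          rw [mem_descSet_succ hi] at hd
          omega
        · rw [if_neg hd] at hds
          rw [mem_descSet_succ hi] at hd
          omega
    · -- backward membership
      intro t ht
      obtain ⟨hlen, hsum, hsort⟩ := mem_anti.1 ht
      refine mem_Cs.2 ⟨by simp, ?_, ?_⟩
      · rw [sum_ofFn_val (fun m => t.getD m 0 + dstat σ (m+1))]
        rw [Finset.sum_add_distrib, maj_eq_sum_dstat]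
        have : ∑ i ∈ Finset.range σ.length, t.getD i 0 = M - maj σ := by
          rw [← hsum, ← sum_eq_sum_getD t, hlen]
        rw [this]
        omega
      · refine compat_of_adj (by simp) ?_
        intro i hi
        rw [getD_ofFn_val (fun m => t.getD m 0 + dstat σ (m+1)) (by omega : i < σ.length),
            getD_ofFn_val (fun m => t.getD m 0 + dstat σ (m+1)) hi, R_iff]
        have e212 : i + 1 + 1 = i + 2 := by omega
        rw [e212]
        have hads := sorted_ge_iff_adj.1 hsort i (by omega)
        have hds := dstat_succ σ i
        by_cases hd : i + 1 ∈ descSet σ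
        · rw [if_pos hd] at hds
          omega
        · rw [if_neg hd] at hds
          rw [mem_descSet_succ hi] at hd
          omega
    · -- left inverse
      intro t' ht'
      obtain ⟨hlen, hsum, hsort⟩ := mem_Cs.1 ht'
      have hb := dstat_le_of_compat hlen hsort
      refine List.ext_getElem (by simp [hlen]) ?_
      intro i h1 h2
      have hiN : i < σ.length := by simpa using h1
      rw [List.getElem_ofFn]
      simp only
      rw [getD_ofFn_val (fun m => t'.getD m 0 - dstat σ (m+1)) hiN]
      have := hb i hiN
      rw [← List.getD_eq_getElem t' 0 h2]
      omega
    · -- right inverse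
      intro t ht
      obtain ⟨hlen, hsum, hsort⟩ := mem_anti.1 ht
      refine List.ext_getElem (by simp [hlen]) ?_
      intro i h1 h2
      have hiN : i < σ.length := by simpa using h1
      rw [List.getElem_ofFn]
      simp only
      rw [getD_ofFn_val (fun m => t.getD m 0 + dstat σ (m+1)) hiN]
      rw [← List.getD_eq_getElem t 0 h2]
      omega
  · rw [if_neg hM]
    rw [Finset.card_eq_zero, Finset.eq_empty_iff_forall_notMem]
    intro t ht
    obtain ⟨hlen, hsum, hsort⟩ := mem_Cs.1 ht
    have hb := dstat_le_of_compat hlen hsort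
    have : ∑ i ∈ Finset.range σ.length, dstat σ (i+1) ≤ ∑ i ∈ Finset.range σ.length, t.getD i 0 :=
      Finset.sum_le_sum (fun i hi => hb i (Finset.mem_range.1 hi))
    rw [maj_eq_sum_dstat] at this
    rw [← hsum, ← sum_eq_sum_getD t, hlen] at hM
    omega

lemma le_sum_of_forall_le {u : List ℕ} {c : ℕ} (h : ∀ x ∈ u, c ≤ x) :
    c * u.length ≤ u.sum := by
  induction u with
  | nil => simp
  | cons a u ih =>
    have h1 := h a (by simp)
    have h2 : c * u.length ≤ u.sum := ih (fun x hx => h x (by simp [hx]))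
    simp only [List.length_cons, List.sum_cons, Nat.mul_succ]
    omega

lemma sum_map_sub {u : List ℕ} {c : ℕ} (h : ∀ x ∈ u, c ≤ x) :
    (u.map (fun x => x - c)).sum = u.sum - c * u.length := by
  induction u with
  | nil => simp
  | cons a u ih =>
    have h1 := h a (by simp)
    have h2 := le_sum_of_forall_le (fun x hx => h x (List.mem_cons_of_mem a hx))
    have h3 := ih (fun x hx => h x (List.mem_cons_of_mem a hx))
    simp only [List.map_cons, List.sum_cons, List.length_cons, Nat.mul_succ]
    omega

lemma sum_map_add (u : List ℕ) (c : ℕ) :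
    (u.map (fun x => x + c)).sum = u.sum + c * u.length := by
  induction u with
  | nil => simp
  | cons a u ih =>
    simp only [List.map_cons, List.sum_cons, List.length_cons, Nat.mul_succ, ih]
    omega

lemma sorted_ge_le {l : List ℕ} (h : List.Sorted (· ≥ ·) l) {i j : ℕ}
    (hij : i ≤ j) (hj : j < l.length) : l.getD j 0 ≤ l.getD i 0 := by
  rcases Nat.eq_or_lt_of_le hij with rfl | hlt
  · exact le_refl _
  · have := List.pairwise_iff_get.1 h ⟨i, by omega⟩ ⟨j, hj⟩ hlt
    simp only [List.get_eq_getElem] at this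
    rw [List.getD_eq_getElem _ _ (by omega : i < l.length), List.getD_eq_getElem _ _ hj]
    exact this

lemma anti_last_le {m M : ℕ} {l : List ℕ} (hl : l ∈ anti (m+1) M) :
    ∀ x ∈ l, l.getD m 0 ≤ x := by
  obtain ⟨hlen, hsum, hsort⟩ := mem_anti.1 hl
  intro x hx
  obtain ⟨i, hi, rfl⟩ := List.getElem_of_mem hx
  rw [← List.getD_eq_getElem l 0 hi]
  exact sorted_ge_le hsort (by omega) (by omega)

noncomputable def Gs (d : ℕ) : PowerSeries ℚ := PowerSeries.mk fun M => if d ∣ M then 1 else 0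

lemma Gs_inv {d : ℕ} (hd : 0 < d) : ((1 : PowerSeries ℚ) - PowerSeries.X ^ d) * Gs d = 1 := by
  ext M
  rw [sub_mul, one_mul, map_sub, PowerSeries.coeff_one]
  rw [mul_comm, PowerSeries.coeff_mul_X_pow']
  simp only [Gs, PowerSeries.coeff_mk]
  rcases Nat.eq_zero_or_pos M with rfl | hM
  · rw [if_pos (dvd_zero d), if_neg (by omega : ¬ d ≤ 0), if_pos rfl]
    ring
  · rw [if_neg (by omega : ¬ M = 0)]
    by_cases hdM : d ≤ M
    · rw [if_pos hdM]
      have : d ∣ M ↔ d ∣ M - d := by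
        constructor
        · intro h; exact (Nat.dvd_sub h dvd_rfl)
        · intro h
          have : M - d + d = M := by omega
          rw [← this]; exact Nat.dvd_add h dvd_rfl
      rcases em (d ∣ M) with h | h
      · rw [if_pos h, if_pos (this.1 h)]; ring
      · rw [if_neg h, if_neg (fun hc => h (this.2 hc))]; ring
    · rw [if_neg hdM]
      rw [if_neg (fun hc => hdM (Nat.le_of_dvd hM hc))]
      ring

lemma card_anti_succ (m M : ℕ) :
    (anti (m+1) M).card
      = ((Finset.HasAntidiagonal.antidiagonal M).sigma
          (fun p => if (m+1) ∣ p.2 then anti m p.1 else (∅ : Finset (List ℕ)))).card := by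
  refine Finset.card_bij'
    (fun l _ => ⟨(M - (m+1) * l.getD m 0, (m+1) * l.getD m 0),
        (l.take m).map (fun x => x - l.getD m 0)⟩)
    (fun x _ => x.2.map (fun y => y + x.1.2 / (m+1)) ++ [x.1.2 / (m+1)])
    ?_ ?_ ?_ ?_
  · -- forward membership
    intro l hl
    try dsimp only
    obtain ⟨hlen, hsum, hsort⟩ := mem_anti.1 hl
    have hle := anti_last_le hl
    have hql : (m+1) * l.getD m 0 ≤ M := by
      have := le_sum_of_forall_le hle
      rw [hsum, hlen] at this
      rw [Nat.mul_comm]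
      exact this
    have hsplit : (l.take m).sum + l.getD m 0 = M := by
      have h1 := List.sum_take_add_sum_drop l m
      have h2 : l.drop m = [l.getD m 0] := by
        rw [List.drop_eq_getElem_cons (by omega : m < l.length)]
        rw [List.drop_eq_nil_of_le (by omega : l.length ≤ m + 1)]
        rw [List.getD_eq_getElem _ _ (by omega)]
      rw [h2] at h1
      simpa [hsum] using h1
    have hletake : ∀ x ∈ l.take m, l.getD m 0 ≤ x :=
      fun x hx => hle x (List.mem_of_mem_take hx)
    refine Finset.mem_sigma.2 ⟨?_, ?_⟩
    · rw [Finset.HasAntidiagonal.mem_antidiagonal]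
      show M - (m+1) * l.getD m 0 + (m+1) * l.getD m 0 = M
      omega
    show (l.take m).map (fun x => x - l.getD m 0)
        ∈ (if (m+1) ∣ (m+1) * l.getD m 0 then anti m (M - (m+1) * l.getD m 0) else ∅)
    rw [if_pos ⟨l.getD m 0, rfl⟩]
    refine mem_anti.2 ⟨?_, ?_, ?_⟩
    · simp only [List.length_map, List.length_take]
      omega
    · rw [sum_map_sub hletake]
      have hlt : (l.take m).length = m := by
        simp only [List.length_take]; omega
      rw [hlt]
      have := le_sum_of_forall_le hletake
      rw [hlt] at this
      have hX : (m+1) * l.getD m 0 = l.getD m 0 * m + l.getD m 0 := by ring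
      omega
    · exact List.Pairwise.map _ (fun a b hab => Nat.sub_le_sub_right hab _)
        (List.Pairwise.sublist (List.take_sublist m l) hsort)
  · -- backward membership
    rintro ⟨⟨p, q⟩, u⟩ hx
    obtain ⟨hpq, hu⟩ := Finset.mem_sigma.1 hx
    dsimp only at hpq hu ⊢
    rw [Finset.HasAntidiagonal.mem_antidiagonal] at hpq
    by_cases hdvd : (m+1) ∣ q
    · rw [if_pos hdvd] at hu
      obtain ⟨hulen, husum, husort⟩ := mem_anti.1 hu
      have hqs : (m+1) * (q / (m+1)) = q := Nat.mul_div_cancel' hdvd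
      refine mem_anti.2 ⟨by simp [hulen], ?_, ?_⟩
      · rw [List.sum_append, sum_map_add, hulen, husum]
        simp only [List.sum_cons, List.sum_nil]
        have : (m+1) * (q / (m+1)) = q / (m+1) * m + q / (m+1) := by ring
        omega
      · refine List.pairwise_append.2 ⟨List.Pairwise.map _ (fun a b hab => by omega) husort, by simp, ?_⟩
        intro x hx' y hy'
        simp only [List.mem_singleton] at hy'
        obtain ⟨z, _, rfl⟩ := List.mem_map.1 hx'
        omega
    · rw [if_neg hdvd] at hu
      exact absurd hu (Finset.notMem_empty _)
  · -- left inverse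
    intro l hl
    obtain ⟨hlen, hsum, hsort⟩ := mem_anti.1 hl
    have hle := anti_last_le hl
    have hletake : ∀ x ∈ l.take m, l.getD m 0 ≤ x :=
      fun x hx => hle x (List.mem_of_mem_take hx)
    dsimp only
    have hs : (m+1) * l.getD m 0 / (m+1) = l.getD m 0 :=
      Nat.mul_div_cancel_left _ (by omega)
    rw [hs, List.map_map]
    have hmapid : ((l.take m).map ((fun y => y + l.getD m 0) ∘ (fun x => x - l.getD m 0)))
        = l.take m := by
      rw [List.map_congr_left (g := id) (fun a ha => by
        simp only [Function.comp, id_eq]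
        have := hletake a ha
        omega)]
      exact List.map_id _
    rw [hmapid]
    have h2 : l.drop m = [l.getD m 0] := by
      rw [List.drop_eq_getElem_cons (by omega : m < l.length)]
      rw [List.drop_eq_nil_of_le (by omega : l.length ≤ m + 1)]
      rw [List.getD_eq_getElem _ _ (by omega)]
    rw [← h2]
    exact List.take_append_drop m l
  · -- right inverse
    rintro ⟨⟨p, q⟩, u⟩ hx
    obtain ⟨hpq, hu⟩ := Finset.mem_sigma.1 hx
    dsimp only at hpq hu ⊢
    rw [Finset.HasAntidiagonal.mem_antidiagonal] at hpq
    by_cases hdvd : (m+1) ∣ q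
    swap
    · rw [if_neg hdvd] at hu
      exact absurd hu (Finset.notMem_empty _)
    rw [if_pos hdvd] at hu
    obtain ⟨hulen, husum, husort⟩ := mem_anti.1 hu
    have hqs : (m+1) * (q / (m+1)) = q := Nat.mul_div_cancel' hdvd
    have hgd : (u.map (fun y => y + q / (m+1)) ++ [q / (m+1)]).getD m 0 = q / (m+1) := by
      rw [List.getD_eq_getElem _ _ (by simp [hulen])]
      rw [List.getElem_append_right (by simp [hulen])]
      simp [hulen]
    rw [hgd, hqs]
    have htake : (u.map (fun y => y + q / (m+1)) ++ [q / (m+1)]).take m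
        = u.map (fun y => y + q / (m+1)) := by
      have hlm : (u.map (fun y => y + q / (m+1))).length = m := by simp [hulen]
      exact List.take_left' hlm
    rw [htake, List.map_map]
    have hmapid : (u.map ((fun x => x - q / (m+1)) ∘ (fun y => y + q / (m+1)))) = u := by
      rw [List.map_congr_left (g := id) (fun a ha => by
        simp only [Function.comp, id_eq]
        omega)]
      exact List.map_id _
    rw [hmapid]
    have hp : M - q = p := by omega
    rw [hp]

lemma Pgf_succ (m : ℕ) : Pgf (m+1) = Pgf m * Gs (m+1) := by
  ext M
  rw [PowerSeries.coeff_mul]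
  simp only [Pgf, Gs, PowerSeries.coeff_mk]
  rw [card_anti_succ, Finset.card_sigma]
  push_cast
  refine Finset.sum_congr rfl fun p hp => ?_
  split_ifs with h
  · simp
  · simp

lemma Pgf_zero : Pgf 0 = 1 := by
  ext M
  simp only [Pgf, PowerSeries.coeff_mk, PowerSeries.coeff_one]
  rcases Nat.eq_zero_or_pos M with rfl | hM
  · rw [if_pos rfl]
    have : anti 0 0 = {([] : List ℕ)} := by
      ext l
      simp only [mem_anti, Finset.mem_singleton]
      constructor
      · rintro ⟨h1, _, _⟩
        exact List.length_eq_zero_iff.1 h1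
      · rintro rfl
        exact ⟨rfl, rfl, List.Pairwise.nil⟩
    rw [this]
    simp
  · rw [if_neg (by omega)]
    have : anti 0 M = ∅ := by
      rw [Finset.eq_empty_iff_forall_notMem]
      intro l hl
      obtain ⟨h1, h2, _⟩ := mem_anti.1 hl
      rw [List.length_eq_zero_iff.1 h1] at h2
      simp at h2
      omega
    rw [this]
    simp

lemma anti_zero_card (m : ℕ) : (anti m 0).card = 1 := by
  rw [Finset.card_eq_one]
  refine ⟨List.replicate m 0, ?_⟩
  ext l
  simp only [mem_anti, Finset.mem_singleton]
  constructor
  · rintro ⟨h1, h2, h3⟩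
    refine List.eq_replicate_iff.2 ⟨h1, fun x hx => ?_⟩
    exact (List.sum_eq_zero_iff.1 h2) x hx
  · rintro rfl
    refine ⟨List.length_replicate, ?_, ?_⟩
    · simp
    · exact List.pairwise_replicate.2 (Or.inr (le_refl 0))

lemma QsPgf (m : ℕ) :
    (∏ i ∈ Finset.range m, ((1 : PowerSeries ℚ) - PowerSeries.X ^ (i+1))) * Pgf m = 1 := by
  induction m with
  | zero => simp [Pgf_zero]
  | succ m ih =>
    rw [Finset.prod_range_succ, Pgf_succ]
    have hre : (∏ i ∈ Finset.range m, ((1 : PowerSeries ℚ) - PowerSeries.X ^ (i+1)))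
          * ((1 : PowerSeries ℚ) - PowerSeries.X ^ (m+1)) * (Pgf m * Gs (m+1))
        = ((∏ i ∈ Finset.range m, ((1 : PowerSeries ℚ) - PowerSeries.X ^ (i+1))) * Pgf m)
          * (((1 : PowerSeries ℚ) - PowerSeries.X ^ (m+1)) * Gs (m+1)) := by ring
    rw [hre, ih, Gs_inv (by omega), mul_one]

lemma Pgf_ne_zero (m : ℕ) : Pgf m ≠ 0 := by
  intro h
  have h0 : PowerSeries.coeff 0 (Pgf m) = 1 := by
    simp [Pgf, anti_zero_card]
  rw [h] at h0
  simp at h0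

-- helper lemmas for the merge bijection

lemma sorted_snd_of_sorted {l : List (ℤ × ℕ)} (h : List.Sorted R l) :
    List.Sorted (· ≥ ·) (l.map Prod.snd) :=
  List.Pairwise.map _ (fun p q hpq => by unfold R at hpq; omega) h

lemma map_fst_filter_ne (l : List (ℤ × ℕ)) (r : ℤ) :
    (l.filter (fun p => p.1 ≠ r)).map Prod.fst = (l.map Prod.fst).filter (fun x => x ≠ r) := by
  induction l with
  | nil => rfl
  | cons p l ih =>
    simp only [decide_not] at ih ⊢
    by_cases h : p.1 = r <;> simp [List.filter_cons, h, ih]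

lemma map_fst_filter_eq (l : List (ℤ × ℕ)) (r : ℤ) :
    (l.filter (fun p => p.1 = r)).map Prod.fst = (l.map Prod.fst).filter (fun x => x = r) := by
  induction l with
  | nil => rfl
  | cons p l ih =>
    by_cases h : p.1 = r
    · simp [List.filter_cons, h, ih]
    · simp [List.filter_cons, h, ih]

lemma filter_partition_perm (l : List (ℤ × ℕ)) (r : ℤ) :
    (l.filter (fun p => p.1 ≠ r)) ++ (l.filter (fun p => p.1 = r)) ~ l := by
  have h := List.filter_append_perm (fun p => decide (p.1 ≠ r)) l
  have h2 : l.filter (fun p => !decide (p.1 ≠ r)) = l.filter (fun p => p.1 = r) := by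
    refine List.filter_congr (fun x _ => ?_)
    by_cases hx : x.1 = r <;> simp [hx]
  rwa [h2] at h

lemma zip_replicate_eq_map {g : List ℕ} {r : ℤ} {a : ℕ} (h : g.length = a) :
    (List.replicate a r).zip g = g.map (fun v => (r, v)) := by
  subst h
  induction g with
  | nil => rfl
  | cons x g ih => simpa [List.replicate_succ] using ih

lemma sorted_constmap_iff {g : List ℕ} {r : ℤ} :
    List.Sorted R (g.map (fun v => (r, v))) ↔ List.Sorted (· ≥ ·) g := by
  unfold List.Sorted
  rw [List.pairwise_map]
  constructor
  · exact List.Pairwise.imp (fun {u v} h => by rw [R_iff] at h; omega)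
  · exact List.Pairwise.imp (fun {u v} h => by rw [R_iff]; omega)

lemma constmap_of_fst_eq {l : List (ℤ × ℕ)} {r : ℤ} (h : ∀ p ∈ l, p.1 = r) :
    (l.map Prod.snd).map (fun v => (r, v)) = l := by
  induction l with
  | nil => rfl
  | cons p l ih =>
    have h1 : p.1 = r := h p (by simp)
    simp only [List.map_cons]
    rw [ih (fun q hq => h q (by simp [hq]))]
    congr 1
    exact Prod.ext h1.symm rfl

lemma mem_perms {l σ : List ℤ} : σ ∈ l.permutations.toFinset ↔ σ ~ l := by
  rw [List.mem_toFinset, List.mem_permutations]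

lemma merge_count (L₁ : List ℤ) (r : ℤ) (hr : ∀ x ∈ L₁, x < r) (a M : ℕ) :
    ∑ σ ∈ (L₁ ++ List.replicate a r).permutations.toFinset, (Cs σ M).card
      = ∑ p ∈ Finset.HasAntidiagonal.antidiagonal M,
          (∑ w ∈ L₁.permutations.toFinset, (Cs w p.1).card) * (anti a p.2).card := by
  classical
  rw [← Finset.card_sigma]
  have hRHS : ∑ p ∈ Finset.HasAntidiagonal.antidiagonal M,
        (∑ w ∈ L₁.permutations.toFinset, (Cs w p.1).card) * (anti a p.2).card
      = (((Finset.HasAntidiagonal.antidiagonal M) ×ˢ L₁.permutations.toFinset).sigma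
          (fun q => Cs q.2 q.1.1 ×ˢ anti a q.1.2)).card := by
    rw [Finset.card_sigma, Finset.sum_product]
    refine Finset.sum_congr rfl fun p _ => ?_
    rw [Finset.sum_mul]
    exact Finset.sum_congr rfl fun w _ => (Finset.card_product _ _).symm
  rw [hRHS]
  refine Finset.card_bij'
    (fun x _ => ⟨(((((x.1.zip x.2).filter (fun p => p.1 ≠ r)).map Prod.snd).sum,
                   ((((x.1.zip x.2).filter (fun p => p.1 = r)).map Prod.snd).sum)),
                  ((x.1.zip x.2).filter (fun p => p.1 ≠ r)).map Prod.fst),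
                 (((x.1.zip x.2).filter (fun p => p.1 ≠ r)).map Prod.snd,
                  ((x.1.zip x.2).filter (fun p => p.1 = r)).map Prod.snd)⟩)
    (fun y _ => ⟨(Multiset.sort
          (↑(y.1.2.zip y.2.1 ++ (List.replicate a r).zip y.2.2)) R).map Prod.fst,
        (Multiset.sort
          (↑(y.1.2.zip y.2.1 ++ (List.replicate a r).zip y.2.2)) R).map Prod.snd⟩)
    ?_ ?_ ?_ ?_
  · -- forward membership
    rintro ⟨σ, t⟩ hx
    obtain ⟨hσ, ht⟩ := Finset.mem_sigma.1 hx
    dsimp only at hσ ht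
    rw [mem_perms] at hσ
    obtain ⟨hlen, hsum, hsort⟩ := mem_Cs.1 ht
    dsimp only
    set l := σ.zip t with hl
    set l₁ := l.filter (fun p => p.1 ≠ r) with hl₁
    set l₂ := l.filter (fun p => p.1 = r) with hl₂
    have hmapfst : l.map Prod.fst = σ := List.map_fst_zip (l₁ := σ) (l₂ := t) (by omega)
    have hmapsnd : l.map Prod.snd = t := List.map_snd_zip (l₁ := σ) (l₂ := t) (by omega)
    have hs₁ : List.Sorted R l₁ := List.Pairwise.filter _ hsort
    have hs₂ : List.Sorted R l₂ := List.Pairwise.filter _ hsort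
    have hw : l₁.map Prod.fst ~ L₁ := by
      rw [hl₁, map_fst_filter_ne, hmapfst]
      have h1 : σ.filter (fun x => x ≠ r) ~ (L₁ ++ List.replicate a r).filter (fun x => x ≠ r) :=
        List.Perm.filter _ hσ
      rw [List.filter_append] at h1
      have h2 : L₁.filter (fun x => x ≠ r) = L₁ :=
        List.filter_eq_self.2 (fun x hx => by
          have := hr x hx
          simp only [decide_eq_true_eq]
          omega)
      have h3 : (List.replicate a r).filter (fun x => x ≠ r) = [] :=
        List.filter_eq_nil_iff.2 (fun x hx => by
          have := List.eq_of_mem_replicate hx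
          simp [this])
      rw [h2, h3, List.append_nil] at h1
      exact h1
    have hrep : (l₂.map Prod.fst) ~ List.replicate a r := by
      rw [hl₂, map_fst_filter_eq, hmapfst]
      have h1 : σ.filter (fun x => x = r) ~ (L₁ ++ List.replicate a r).filter (fun x => x = r) :=
        List.Perm.filter _ hσ
      rw [List.filter_append] at h1
      have h2 : L₁.filter (fun x => x = r) = [] :=
        List.filter_eq_nil_iff.2 (fun x hx => by
          have := hr x hx
          simp only [decide_eq_true_eq]
          omega)
      have h3 : (List.replicate a r).filter (fun x => x = r) = List.replicate a r :=
        List.filter_eq_self.2 (fun x hx => by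
          have := List.eq_of_mem_replicate hx
          simp [this])
      rw [h2, h3, List.nil_append] at h1
      exact h1
    have hlen₂ : (l₂.map Prod.snd).length = a := by
      have := hrep.length_eq
      simpa using this
    have hsumsplit : (l₁.map Prod.snd).sum + (l₂.map Prod.snd).sum = M := by
      have hp : (l₁ ++ l₂) ~ l := filter_partition_perm l r
      have := (hp.map Prod.snd).sum_eq
      rw [List.map_append, List.sum_append] at this
      rw [this, hmapsnd, hsum]
    refine Finset.mem_sigma.2 ⟨Finset.mem_product.2 ⟨?_, ?_⟩, ?_⟩
    · rw [Finset.HasAntidiagonal.mem_antidiagonal]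
      exact hsumsplit
    · exact mem_perms.2 hw
    · refine Finset.mem_product.2 ⟨?_, ?_⟩
      · refine mem_Cs.2 ⟨by simp, rfl, ?_⟩
        rw [zip_map_fst_snd]
        exact hs₁
      · refine mem_anti.2 ⟨hlen₂, rfl, sorted_snd_of_sorted hs₂⟩
  · -- backward membership
    rintro ⟨⟨⟨M₁, M₂⟩, w⟩, t₁, g⟩ hy
    obtain ⟨hq, hcg⟩ := Finset.mem_sigma.1 hy
    obtain ⟨hM, hw⟩ := Finset.mem_product.1 hq
    obtain ⟨hc, hg⟩ := Finset.mem_product.1 hcg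
    dsimp only at hM hw hc hg ⊢
    rw [Finset.HasAntidiagonal.mem_antidiagonal] at hM
    rw [mem_perms] at hw
    obtain ⟨hlen₁, hsum₁, hsort₁⟩ := mem_Cs.1 hc
    obtain ⟨hleng, hsumg, hsortg⟩ := mem_anti.1 hg
    set u := w.zip t₁ with hu
    set v := (List.replicate a r).zip g with hv
    set ls := Multiset.sort (↑(u ++ v)) R with hls
    have hperm : ls ~ u ++ v := Multiset.coe_eq_coe.1 (Multiset.sort_eq _ R)
    have hufst : u.map Prod.fst = w := List.map_fst_zip (l₁ := w) (l₂ := t₁) (by omega)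
    have husnd : u.map Prod.snd = t₁ := List.map_snd_zip (l₁ := w) (l₂ := t₁) (by omega)
    have hvmap : v = g.map (fun x => (r, x)) := zip_replicate_eq_map hleng
    have hvfst : v.map Prod.fst = List.replicate a r :=
      List.map_fst_zip (l₁ := _) (l₂ := g) (by simp [hleng])
    have hvsnd : v.map Prod.snd = g := List.map_snd_zip (l₁ := _) (l₂ := g) (by simp [hleng])
    have hσperm : ls.map Prod.fst ~ L₁ ++ List.replicate a r := by
      refine (hperm.map Prod.fst).trans ?_
      rw [List.map_append, hufst, hvfst]
      exact hw.append_right _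
    have hσlen : (ls.map Prod.fst).length = (ls.map Prod.snd).length := by simp
    refine Finset.mem_sigma.2 ⟨mem_perms.2 hσperm, ?_⟩
    refine mem_Cs.2 ⟨by simp, ?_, ?_⟩
    · have := (hperm.map Prod.snd).sum_eq
      rw [List.map_append, List.sum_append, husnd, hvsnd] at this
      rw [this, hsum₁, hsumg, hM]
    · rw [zip_map_fst_snd]
      exact Multiset.pairwise_sort _ R
  · -- j ∘ i = id
    rintro ⟨σ, t⟩ hx
    obtain ⟨hσ, ht⟩ := Finset.mem_sigma.1 hx
    dsimp only at hσ ht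
    rw [mem_perms] at hσ
    obtain ⟨hlen, hsum, hsort⟩ := mem_Cs.1 ht
    dsimp only
    set l := σ.zip t with hl
    have hmapfst : l.map Prod.fst = σ := List.map_fst_zip (l₁ := σ) (l₂ := t) (by omega)
    have hmapsnd : l.map Prod.snd = t := List.map_snd_zip (l₁ := σ) (l₂ := t) (by omega)
    have hzu : (((l.filter (fun p => p.1 ≠ r)).map Prod.fst).zip
        ((l.filter (fun p => p.1 ≠ r)).map Prod.snd)) = l.filter (fun p => p.1 ≠ r) :=
      zip_map_fst_snd _
    have hconst : ∀ p ∈ l.filter (fun p => p.1 = r), p.1 = r := by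
      intro p hp
      have := List.of_mem_filter hp
      simpa using this
    have hzv : (List.replicate a r).zip ((l.filter (fun p => p.1 = r)).map Prod.snd)
        = l.filter (fun p => p.1 = r) := by
      have hlen₂ : ((l.filter (fun p => p.1 = r)).map Prod.snd).length = a := by
        have h1 : (l.filter (fun p => p.1 = r)).map Prod.fst ~ List.replicate a r := by
          rw [map_fst_filter_eq, hmapfst]
          have h2 : σ.filter (fun x => x = r)
              ~ (L₁ ++ List.replicate a r).filter (fun x => x = r) := List.Perm.filter _ hσ
          rw [List.filter_append] at h2
          have h3 : L₁.filter (fun x => x = r) = [] :=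
            List.filter_eq_nil_iff.2 (fun x hx => by
              have := hr x hx
              simp only [decide_eq_true_eq]
              omega)
          have h4 : (List.replicate a r).filter (fun x => x = r) = List.replicate a r :=
            List.filter_eq_self.2 (fun x hx => by
              have := List.eq_of_mem_replicate hx
              simp [this])
          rw [h3, h4, List.nil_append] at h2
          exact h2
        have := h1.length_eq
        simpa using this
      rw [zip_replicate_eq_map hlen₂]
      exact constmap_of_fst_eq hconst
    rw [hzu, hzv]
    have hperm2 : (l.filter (fun p => p.1 ≠ r)) ++ (l.filter (fun p => p.1 = r)) ~ l :=
      filter_partition_perm l r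
    have hsorted : List.Sorted R (Multiset.sort
        (↑((l.filter (fun p => p.1 ≠ r)) ++ (l.filter (fun p => p.1 = r)))) R) :=
      Multiset.pairwise_sort _ R
    have heq : Multiset.sort
        (↑((l.filter (fun p => p.1 ≠ r)) ++ (l.filter (fun p => p.1 = r)))) R = l := by
      refine List.Perm.eq_of_pairwise' hsorted hsort ?_
      exact (Multiset.coe_eq_coe.1 (Multiset.sort_eq _ R)).trans hperm2
    rw [heq, hmapfst, hmapsnd]
  · -- i ∘ j = id
    rintro ⟨⟨⟨M₁, M₂⟩, w⟩, t₁, g⟩ hy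
    obtain ⟨hq, hcg⟩ := Finset.mem_sigma.1 hy
    obtain ⟨hM, hw⟩ := Finset.mem_product.1 hq
    obtain ⟨hc, hg⟩ := Finset.mem_product.1 hcg
    dsimp only at hM hw hc hg ⊢
    rw [Finset.HasAntidiagonal.mem_antidiagonal] at hM
    rw [mem_perms] at hw
    obtain ⟨hlen₁, hsum₁, hsort₁⟩ := mem_Cs.1 hc
    obtain ⟨hleng, hsumg, hsortg⟩ := mem_anti.1 hg
    set u := w.zip t₁ with hu
    set v := (List.replicate a r).zip g with hv
    set ls := Multiset.sort (↑(u ++ v)) R with hls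
    have hperm : ls ~ u ++ v := Multiset.coe_eq_coe.1 (Multiset.sort_eq _ R)
    have hufst : u.map Prod.fst = w := List.map_fst_zip (l₁ := w) (l₂ := t₁) (by omega)
    have husnd : u.map Prod.snd = t₁ := List.map_snd_zip (l₁ := w) (l₂ := t₁) (by omega)
    have hvmap : v = g.map (fun x => (r, x)) := zip_replicate_eq_map hleng
    have hvsnd : v.map Prod.snd = g := List.map_snd_zip (l₁ := _) (l₂ := g) (by simp [hleng])
    have hsortls : List.Sorted R ls := Multiset.pairwise_sort _ R
    have hzls : ((ls.map Prod.fst).zip (ls.map Prod.snd)) = ls := zip_map_fst_snd _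
    rw [hzls]
    -- identify the filters of ls with u and v
    have huflt : u.filter (fun p => p.1 ≠ r) = u := by
      refine List.filter_eq_self.2 (fun p hp => ?_)
      have hpw : p.1 ∈ w := by
        have := List.of_mem_zip (a := p.1) (b := p.2) (by simpa using hp)
        exact this.1
      have := hr p.1 (hw.mem_iff.1 hpw)
      simp only [decide_eq_true_eq]
      omega
    have hvflt : v.filter (fun p => p.1 ≠ r) = [] := by
      refine List.filter_eq_nil_iff.2 (fun p hp => ?_)
      rw [hvmap] at hp
      obtain ⟨x, _, rfl⟩ := List.mem_map.1 hp
      simp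
    have huflt2 : u.filter (fun p => p.1 = r) = [] := by
      refine List.filter_eq_nil_iff.2 (fun p hp => ?_)
      have hpw : p.1 ∈ w := by
        have := List.of_mem_zip (a := p.1) (b := p.2) (by simpa using hp)
        exact this.1
      have := hr p.1 (hw.mem_iff.1 hpw)
      simp only [decide_eq_true_eq]
      omega
    have hvflt2 : v.filter (fun p => p.1 = r) = v := by
      refine List.filter_eq_self.2 (fun p hp => ?_)
      rw [hvmap] at hp
      obtain ⟨x, _, rfl⟩ := List.mem_map.1 hp
      simp
    have hfperm1 : ls.filter (fun p => p.1 ≠ r) ~ u := by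
      have := List.Perm.filter (fun p => decide (p.1 ≠ r)) hperm
      rwa [List.filter_append, huflt, hvflt, List.append_nil] at this
    have hfperm2 : ls.filter (fun p => p.1 = r) ~ v := by
      have := List.Perm.filter (fun p => decide (p.1 = r)) hperm
      rwa [List.filter_append, huflt2, hvflt2, List.nil_append] at this
    have hsortu : List.Sorted R u := hsort₁
    have hsortv : List.Sorted R v := by
      rw [hvmap, sorted_constmap_iff]
      exact hsortg
    have hfeq1 : ls.filter (fun p => p.1 ≠ r) = u :=
      List.Perm.eq_of_pairwise' (List.Pairwise.filter _ hsortls) hsortu hfperm1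
    have hfeq2 : ls.filter (fun p => p.1 = r) = v :=
      List.Perm.eq_of_pairwise' (List.Pairwise.filter _ hsortls) hsortv hfperm2
    rw [hfeq1, hfeq2, hufst, husnd, hvsnd, hsum₁, hsumg]

def bigL (k : ℕ) (a : ℕ → ℕ) : List ℤ :=
  (List.range k).flatMap (fun i => List.replicate (a (i + 1)) ((i : ℤ) + 1))

lemma bigL_succ (k : ℕ) (a : ℕ → ℕ) :
    bigL (k+1) a = bigL k a ++ List.replicate (a (k+1)) ((k : ℤ) + 1) := by
  unfold bigL
  rw [List.range_succ, List.flatMap_append]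
  simp

lemma bigL_lt (k : ℕ) (a : ℕ → ℕ) : ∀ x ∈ bigL k a, x < (k : ℤ) + 1 := by
  intro x hx
  unfold bigL at hx
  rw [List.mem_flatMap] at hx
  obtain ⟨i, hi, hx⟩ := hx
  rw [List.mem_range] at hi
  have hxe := List.eq_of_mem_replicate hx
  subst hxe
  have : (i : ℤ) < (k : ℤ) := by exact_mod_cast hi
  omega

lemma bigL_len (k : ℕ) (a : ℕ → ℕ) :
    (bigL k a).length = ∑ j ∈ Finset.Icc 1 k, a j := by
  induction k with
  | zero => simp [bigL]
  | succ k ih =>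
    rw [bigL_succ, List.length_append, ih, List.length_replicate,
      Finset.sum_Icc_succ_top (by omega : 1 ≤ k + 1)]

lemma maj_nil : maj ([] : List ℤ) = 0 := by
  have h : descSet ([] : List ℤ) = ∅ := by
    unfold descSet
    rw [show ([] : List ℤ).length - 1 = 0 from rfl]
    rw [Finset.Icc_eq_empty (by omega)]
    rfl
  rw [maj, h]
  rfl

lemma coeff_Xpow_mul_Pgf {σ : List ℤ} {N : ℕ} (hN : σ.length = N) (M : ℕ) :
    PowerSeries.coeff M ((PowerSeries.X ^ maj σ : PowerSeries ℚ) * Pgf N)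
      = ((Cs σ M).card : ℚ) := by
  rw [mul_comm, PowerSeries.coeff_mul_X_pow', card_Cs, hN]
  split_ifs with h
  · simp [Pgf]
  · simp

lemma series_S (k : ℕ) (a : ℕ → ℕ) :
    ((∑ σ ∈ (bigL k a).permutations.toFinset, (X : Polynomial ℚ) ^ maj σ : Polynomial ℚ)
        : PowerSeries ℚ) * Pgf (bigL k a).length
      = ∏ j ∈ Finset.Icc 1 k, Pgf (a j) := by
  induction k with
  | zero =>
    have h1 : bigL 0 a = [] := rfl
    rw [h1]
    simp only [List.permutations_nil]
    rw [show ([[]] : List (List ℤ)).toFinset = {[]} from rfl, Finset.sum_singleton,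
      maj_nil, pow_zero]
    rw [show ([] : List ℤ).length = 0 from rfl, Pgf_zero, Finset.Icc_eq_empty (by omega),
      Finset.prod_empty, Polynomial.coe_one, one_mul]
  | succ k ih =>
    rw [bigL_succ k a, Finset.prod_Icc_succ_top (by omega : 1 ≤ k + 1), ← ih]
    have hlen : (bigL k a ++ List.replicate (a (k+1)) ((k : ℤ) + 1)).length
        = (bigL k a).length + a (k+1) := by simp
    rw [hlen]
    refine PowerSeries.ext fun M => ?_
    have hcast : ∀ (L : List ℤ),
        ((∑ σ ∈ L.permutations.toFinset, (X : Polynomial ℚ) ^ maj σ : Polynomial ℚ)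
          : PowerSeries ℚ)
        = ∑ σ ∈ L.permutations.toFinset, (PowerSeries.X ^ maj σ : PowerSeries ℚ) := by
      intro L
      simp only [← Polynomial.coeToPowerSeries.ringHom_apply, map_sum, map_pow]
      simp only [Polynomial.coeToPowerSeries.ringHom_apply, Polynomial.coe_X]
    -- LHS
    rw [hcast, Finset.sum_mul, map_sum]
    have hL : ∀ σ ∈ (bigL k a ++ List.replicate (a (k+1)) ((k : ℤ) + 1)).permutations.toFinset,
        PowerSeries.coeff M (PowerSeries.X ^ maj σ * Pgf ((bigL k a).length + a (k+1)))
          = ((Cs σ M).card : ℚ) := by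
      intro σ hσ
      refine coeff_Xpow_mul_Pgf ?_ M
      rw [(mem_perms.1 hσ).length_eq]
      simp
    rw [Finset.sum_congr rfl hL]
    -- RHS
    rw [PowerSeries.coeff_mul]
    have hR : ∀ p ∈ Finset.HasAntidiagonal.antidiagonal M,
        (PowerSeries.coeff p.1)
            (((∑ σ ∈ (bigL k a).permutations.toFinset, (X : Polynomial ℚ) ^ maj σ : Polynomial ℚ)
              : PowerSeries ℚ) * Pgf (bigL k a).length)
          * (PowerSeries.coeff p.2) (Pgf (a (k+1)))
        = (∑ w ∈ (bigL k a).permutations.toFinset, ((Cs w p.1).card : ℚ))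
          * ((anti (a (k+1)) p.2).card : ℚ) := by
      intro p hp
      congr 1
      · rw [hcast, Finset.sum_mul, map_sum]
        refine Finset.sum_congr rfl fun w hw => ?_
        refine coeff_Xpow_mul_Pgf ?_ p.1
        exact (mem_perms.1 hw).length_eq
      · simp [Pgf]
    rw [Finset.sum_congr rfl hR]
    have hm := merge_count (bigL k a) ((k : ℤ) + 1) (bigL_lt k a) (a (k+1)) M
    exact_mod_cast congrArg (Nat.cast : ℕ → ℚ) hm

lemma one_sub_geom (i : ℕ) :
    ((1 : Polynomial ℚ) - X) * (∑ j ∈ Finset.range (i+1), (X : Polynomial ℚ)^j)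
      = 1 - X^(i+1) := by
  have h := geom_sum_mul (X : Polynomial ℚ) (i+1)
  linear_combination -h

lemma Qpoly_eq (m : ℕ) :
    ∏ i ∈ Finset.range m, ((1 : Polynomial ℚ) - X^(i+1)) = (1 - X)^m * qFact m := by
  unfold qFact
  rw [show ((1 : Polynomial ℚ) - X)^m = ∏ _i ∈ Finset.range m, ((1 : Polynomial ℚ) - X) from by
    rw [Finset.prod_const, Finset.card_range]]
  rw [← Finset.prod_mul_distrib]
  exact Finset.prod_congr rfl fun i _ => (one_sub_geom i).symm

lemma qFact_ne_zero (m : ℕ) : qFact m ≠ 0 := by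
  intro h
  have he : Polynomial.eval 0 (qFact m) = 1 := by
    unfold qFact
    rw [Polynomial.eval_prod]
    have hone : ∀ i ∈ Finset.range m,
        Polynomial.eval 0 (∑ j ∈ Finset.range (i+1), (X : Polynomial ℚ)^j) = 1 := by
      intro i _
      rw [Polynomial.eval_finset_sum]
      simp only [Polynomial.eval_pow, Polynomial.eval_X]
      rw [Finset.sum_congr rfl (fun j _ => zero_pow_eq j)]
      rw [Finset.sum_ite_eq' (Finset.range (i+1)) 0 (fun _ => (1:ℚ))]
      simp
    rw [Finset.prod_congr rfl hone, Finset.prod_const_one]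
  rw [h] at he
  simp at he

lemma one_sub_X_ne : (1 : Polynomial ℚ) - X ≠ 0 := by
  intro h
  have := congrArg (fun p => Polynomial.coeff p 1) h
  simp [Polynomial.coeff_one] at this

end Mac

/-- MacMahon: for the multiset T = {1^{a₁}, 2^{a₂}, ..., k^{a_k}} with a₁ + ... + a_k = n,
the generating function for maj over all words that are permutations of T is the
q-multinomial coefficient [n; a₁,...,a_k]_q. -/
theorem macmahon_maj (n k : ℕ) (a : ℕ → ℕ) (hn : ∑ i ∈ Finset.Icc 1 k, a i = n) :
    ∑ σ ∈ ((List.range k).flatMap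
        (fun i => List.replicate (a (i + 1)) ((i : ℤ) + 1))).permutations.toFinset,
        (X : Polynomial ℚ) ^ (maj σ) =
      qFact n / ∏ i ∈ Finset.Icc 1 k, qFact (a i) := by
  classical
  have hgoal : ((List.range k).flatMap fun i => List.replicate (a (i + 1)) ((i : ℤ)+1))
      = Mac.bigL k a := rfl
  rw [hgoal]
  set S : Polynomial ℚ := ∑ σ ∈ (Mac.bigL k a).permutations.toFinset, (X : Polynomial ℚ)^maj σ
    with hS
  have hlen : (Mac.bigL k a).length = n := by rw [Mac.bigL_len, hn]
  have hser := Mac.series_S k a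
  rw [hlen] at hser
  have h1 : ((∏ j ∈ Finset.Icc 1 k, ∏ i ∈ Finset.range (a j),
          ((1 : PowerSeries ℚ) - PowerSeries.X^(i+1))) * (S : PowerSeries ℚ)) * Mac.Pgf n
      = (∏ i ∈ Finset.range n, ((1 : PowerSeries ℚ) - PowerSeries.X^(i+1))) * Mac.Pgf n := by
    rw [Mac.QsPgf n, mul_assoc, hser, ← Finset.prod_mul_distrib]
    rw [Finset.prod_congr rfl (fun j _ => Mac.QsPgf (a j))]
    exact Finset.prod_const_one
  have h2 := mul_right_cancel₀ (Mac.Pgf_ne_zero n) h1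
  have hcoeQ : ∀ m : ℕ, ((∏ i ∈ Finset.range m, ((1 : Polynomial ℚ) - X^(i+1)) : Polynomial ℚ)
        : PowerSeries ℚ)
      = ∏ i ∈ Finset.range m, ((1 : PowerSeries ℚ) - PowerSeries.X^(i+1)) := by
    intro m
    simp only [← Polynomial.coeToPowerSeries.ringHom_apply, map_prod, map_sub, map_one, map_pow]
    simp only [Polynomial.coeToPowerSeries.ringHom_apply, Polynomial.coe_X]
  have h3 : ((∏ j ∈ Finset.Icc 1 k, ∏ i ∈ Finset.range (a j),
        ((1 : Polynomial ℚ) - X^(i+1))) * S : Polynomial ℚ)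
      = ∏ i ∈ Finset.range n, ((1 : Polynomial ℚ) - X^(i+1)) := by
    rw [← Polynomial.coe_inj]
    push_cast
    rw [hcoeQ]
    calc ((∏ j ∈ Finset.Icc 1 k, ∏ i ∈ Finset.range (a j),
            ((1 : Polynomial ℚ) - X^(i+1)) : Polynomial ℚ) : PowerSeries ℚ) * (S : PowerSeries ℚ)
        = (∏ j ∈ Finset.Icc 1 k, ∏ i ∈ Finset.range (a j),
            ((1 : PowerSeries ℚ) - PowerSeries.X^(i+1))) * (S : PowerSeries ℚ) := by
          congr 1
          simp only [← Polynomial.coeToPowerSeries.ringHom_apply, map_prod, map_sub, map_one,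
            map_pow]
          simp only [Polynomial.coeToPowerSeries.ringHom_apply, Polynomial.coe_X]
      _ = ∏ i ∈ Finset.range n, ((1 : PowerSeries ℚ) - PowerSeries.X^(i+1)) := h2
  have h4 : ((1 - X : Polynomial ℚ)^n * ∏ j ∈ Finset.Icc 1 k, qFact (a j)) * S
      = (1 - X : Polynomial ℚ)^n * qFact n := by
    have hl : ∏ j ∈ Finset.Icc 1 k, ∏ i ∈ Finset.range (a j), ((1 : Polynomial ℚ) - X^(i+1))
        = (1 - X : Polynomial ℚ)^n * ∏ j ∈ Finset.Icc 1 k, qFact (a j) := by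
      rw [Finset.prod_congr rfl (fun j _ => Mac.Qpoly_eq (a j)), Finset.prod_mul_distrib,
        Finset.prod_pow_eq_pow_sum, hn]
    rw [← hl, h3, Mac.Qpoly_eq]
  have h5 : (∏ j ∈ Finset.Icc 1 k, qFact (a j)) * S = qFact n := by
    refine mul_left_cancel₀ (pow_ne_zero n Mac.one_sub_X_ne) ?_
    rw [← mul_assoc]
    exact h4
  have hPne : (∏ j ∈ Finset.Icc 1 k, qFact (a j)) ≠ 0 :=
    Finset.prod_ne_zero_iff.2 fun j _ => Mac.qFact_ne_zero (a j)
  exact EuclideanDomain.eq_div_of_mul_eq_right hPne h5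
end
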